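/- arXiv:1205.4155 — 5 statements merged into one kernel-verified Lean document; each statement's English description precedes it below -/
import Mathlib

section
/- Let G be a finite digraph in which every vertex has at least one outgoing edge. For any edge e = (u,v) of G, there exist positive integers S and M such that for all s ≥ S and all positive integer multiples m of M, there is a digraph homomorphism from a balloon of type (s,m) into G mapping the initial vertex of the balloon to u. -/
noncomputable def cantorDist (σ τ : ℕ → Bool) : ℝ :=
  letI := Classical.propDecidable (∃ n, σ n ≠ τ n)
  if h : ∃ n, σ n ≠ τ n then 1 / (Nat.find h + 1) else 0

def IsPartition (P : Finset (Set (ℕ → Bool))) : Prop :=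
  (∀ a ∈ P, IsClopen a ∧ a.Nonempty) ∧
  (∀ a ∈ P, ∀ b ∈ P, a ≠ b → Disjoint a b) ∧
  ⋃₀ (P : Set (Set (ℕ → Bool))) = Set.univ

noncomputable def cantorDiam (A : Set (ℕ → Bool)) : ℝ :=
  sSup {r | ∃ σ ∈ A, ∃ τ ∈ A, r = cantorDist σ τ}

noncomputable def mesh (C : Set (Set (ℕ → Bool))) : ℝ :=
  sSup (cantorDiam '' C)

def gammaEdge (f : (ℕ → Bool) → (ℕ → Bool)) (a b : Set (ℕ → Bool)) : Prop :=
  (f '' a ∩ b).Nonempty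

def balloonEdge (s m : ℕ) (a b : Fin (s + m)) : Prop :=
  b.val = a.val + 1 ∨ (a.val = s + m - 1 ∧ b.val = s)

def dumbbellEdge (r s t : ℕ) (a b : Fin (r + s + t)) : Prop :=
  (b.val = a.val + 1 ∧ a.val + 1 ≠ r) ∨
  (a.val = r - 1 ∧ b.val = 0) ∨
  (a.val = 0 ∧ b.val = r) ∨
  (a.val = r + s + t - 1 ∧ b.val = r + s)

theorem balloon_into_digraph {V : Type*} [Fintype V] (E : V → V → Prop)
    (hE : ∀ x : V, ∃ y : V, E x y) (u v : V) (he : E u v) :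
    ∃ S M : ℕ, 0 < S ∧ 0 < M ∧ ∀ s m : ℕ, ∀ _hs : S ≤ s, ∀ hm : 0 < m, ∀ _hM : M ∣ m,
      ∃ φ : Fin (s + m) → V,
        (∀ a b : Fin (s + m), balloonEdge s m a b → E (φ a) (φ b)) ∧
        φ ⟨0, by omega⟩ = u := by
  classical
  set f : V → V := fun x => Classical.choose (hE x) with hf
  have hfE : ∀ x, E x (f x) := fun x => Classical.choose_spec (hE x)
  let g : ℕ → V := fun n => Nat.rec u (fun k ih => if k = 0 then v else f ih) n
  have hg0 : g 0 = u := rfl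
  have hgs : ∀ n, 1 ≤ n → g (n + 1) = f (g n) := by
    intro n hn
    show (if n = 0 then v else f (g n)) = f (g n)
    simp [Nat.one_le_iff_ne_zero.mp hn]
  have hedge : ∀ n, E (g n) (g (n + 1)) := by
    intro n
    rcases Nat.eq_zero_or_pos n with h | h
    · subst h; exact he
    · rw [hgs n h]; exact hfE (g n)
  -- pigeonhole on g 1, ..., g (card V + 1)
  obtain ⟨a, b, hab, hgab⟩ : ∃ a b : Fin (Fintype.card V + 1), a ≠ b ∧
      g (a.val + 1) = g (b.val + 1) := by
    have : ¬ Function.Injective (fun k : Fin (Fintype.card V + 1) => g (k.val + 1)) := by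
      intro hinj
      have := Fintype.card_le_of_injective _ hinj
      simp at this
    simp only [Function.Injective, not_forall] at this
    obtain ⟨a, b, h1, h2⟩ := this
    exact ⟨a, b, h2, h1⟩
  -- wlog a < b
  obtain ⟨i, j, hij, hi1, hgij⟩ : ∃ i j : ℕ, i < j ∧ 1 ≤ i ∧ g i = g j := by
    rcases lt_or_gt_of_ne hab with h | h
    · exact ⟨a.val + 1, b.val + 1, by omega, by omega, hgab⟩
    · exact ⟨b.val + 1, a.val + 1, by omega, by omega, hgab.symm⟩
  refine ⟨i, j - i, by omega, by omega, ?_⟩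
  have key : ∀ n, i ≤ n → g (n + (j - i)) = g n := by
    intro n hn
    induction n, hn using Nat.le_induction with
    | base => rw [show i + (j - i) = j by omega]; exact hgij.symm
    | succ n hn ih =>
      rw [show n + 1 + (j - i) = (n + (j - i)) + 1 by omega,
        hgs _ (by omega), ih, hgs _ (by omega)]
  have key2 : ∀ k n, i ≤ n → g (n + k * (j - i)) = g n := by
    intro k
    induction k with
    | zero => simp
    | succ k ih =>
      intro n hn
      rw [show n + (k + 1) * (j - i) = (n + k * (j - i)) + (j - i) by ring,
        key _ (by omega), ih n hn]
  intro s m hs hm hM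
  refine ⟨fun k => g k.val, ?_, hg0⟩
  rintro a b (h | ⟨h1, h2⟩)
  · show E (g a.val) (g b.val)
    rw [h]; exact hedge a.val
  · have hb : b.val = s := h2
    have ha : a.val = s + m - 1 := h1
    obtain ⟨k, hk⟩ := hM
    have hsm : g (s + m) = g s := by rw [hk, mul_comm]; exact key2 k s hs
    have : E (g (s + m - 1)) (g (s + m)) := by
      have := hedge (s + m - 1)
      rwa [show s + m - 1 + 1 = s + m by omega] at this
    show E (g a.val) (g b.val)
    rw [ha, hb]
    rwa [hsm] at this
end

section
/- Let G be a finite digraph in which every vertex has both an incoming and an outgoing edge. For any edge e = (u,v) of G, there exist positive integers N, S and M such that for all s ≥ S and all positive integer multiples n of N and m of M, there is a digraph homomorphism from a dumbbell of type (n,s,m) into G under which e is the image of some bar edge of the dumbbell. -/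
lemma succ_mod_aux (N t : ℕ) (hN : 0 < N) :
    (t + 1) % N = if t % N + 1 = N then 0 else t % N + 1 := by
  have h1 : (t + 1) % N = (t % N + 1) % N := (Nat.mod_add_mod t N 1).symm
  by_cases hc : t % N + 1 = N
  · rw [if_pos hc, h1, hc, Nat.mod_self]
  · rw [if_neg hc, h1, Nat.mod_eq_of_lt (by have := Nat.mod_lt t hN; omega)]

lemma iterate_per {V : Type*} (f : V → V) (v : V) (p q : ℕ) (hpq : p < q)
    (h : f^[p] v = f^[q] v) :
    ∀ k d, p ≤ k → (q - p) ∣ d → f^[k + d] v = f^[k] v := by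
  have base : ∀ k, p ≤ k → f^[k + (q - p)] v = f^[k] v := by
    intro k hk
    obtain ⟨t, rfl⟩ := Nat.exists_eq_add_of_le hk
    have h2 : p + t + (q - p) = t + q := by omega
    have h3 : p + t = t + p := by omega
    rw [h2, h3, Function.iterate_add_apply, Function.iterate_add_apply, h]
  intro k d hk hd
  obtain ⟨c, rfl⟩ := hd
  induction c with
  | zero => simp
  | succ c ih =>
    have h4 : k + (q - p) * (c + 1) = (k + (q - p) * c) + (q - p) := by ring
    rw [h4, base _ (by omega), ih]


theorem dumbbell_into_digraph {V : Type*} [Fintype V] (E : V → V → Prop)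
    (hE : ∀ x : V, (∃ y : V, E x y) ∧ (∃ y : V, E y x)) (u v : V) (he : E u v) :
    ∃ N S M : ℕ, 0 < N ∧ 0 < S ∧ 0 < M ∧
      ∀ n s m : ℕ, ∀ _hs : S ≤ s, ∀ hn : 0 < n, ∀ _hN : N ∣ n, ∀ hm : 0 < m, ∀ _hM : M ∣ m,
        ∃ φ : Fin (n + s + m) → V,
          (∀ a b : Fin (n + s + m), dumbbellEdge n s m a b → E (φ a) (φ b)) ∧
          ∃ a b : Fin (n + s + m),
            (n ≤ a.val ∧ a.val + 1 < n + s ∧ b.val = a.val + 1) ∧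
            φ a = u ∧ φ b = v := by
  classical
  have h1 : ∀ x : V, ∃ y : V, E x y := fun x => (hE x).1
  have h2 : ∀ x : V, ∃ y : V, E y x := fun x => (hE x).2
  choose f hf using h1
  choose g hg using h2
  obtain ⟨bs, i, j, hb0, bstep, hij, hbij⟩ :
      ∃ (bs : ℕ → V) (i j : ℕ), bs 0 = u ∧ (∀ k, E (bs (k + 1)) (bs k)) ∧
        i < j ∧ bs i = bs j := by
    have hstep : ∀ k, E (g^[k+1] u) (g^[k] u) := by
      intro k; rw [Function.iterate_succ_apply']; exact hg _
    obtain ⟨a, b, hne, heq⟩ := Finite.exists_ne_map_eq_of_infinite (fun k => g^[k] u)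
    rcases hne.lt_or_gt with h | h
    · exact ⟨fun k => g^[k] u, a, b, rfl, hstep, h, heq⟩
    · exact ⟨fun k => g^[k] u, b, a, rfl, hstep, h, heq.symm⟩
  obtain ⟨fs, p, q, hf0, fstep, hpq, hfper⟩ :
      ∃ (fs : ℕ → V) (p q : ℕ), fs 0 = v ∧ (∀ k, E (fs k) (fs (k + 1))) ∧
        p < q ∧ ∀ k d, p ≤ k → (q - p) ∣ d → fs (k + d) = fs k := by
    have hstep : ∀ k, E (f^[k] v) (f^[k+1] v) := by
      intro k; rw [Function.iterate_succ_apply']; exact hf _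
    obtain ⟨a, b, hne, heq⟩ := Finite.exists_ne_map_eq_of_infinite (fun k => f^[k] v)
    rcases hne.lt_or_gt with h | h
    · exact ⟨fun k => f^[k] v, a, b, rfl, hstep, h, iterate_per f v a b h heq⟩
    · exact ⟨fun k => f^[k] v, b, a, rfl, hstep, h, iterate_per f v b a h heq.symm⟩
  have hN : 0 < j - i := by omega
  refine ⟨j - i, j + q + 1, q - p, hN, by omega, by omega, ?_⟩
  intro n s m hs hn hNn hm hMm
  have hj1 : 1 ≤ j := by omega
  have hjs : j < s := by omega
  set ψ : ℕ → V := fun k =>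
    if k < n then bs (j - k % (j - i))
    else if k - n + 1 ≤ j then bs (j - (k - n + 1)) else fs (k - n + 1 - j - 1) with hψ
  have stepC : ∀ τ : ℕ,
      E (if τ ≤ j then bs (j - τ) else fs (τ - j - 1))
        (if τ + 1 ≤ j then bs (j - (τ + 1)) else fs (τ + 1 - j - 1)) := by
    intro τ
    by_cases hc1 : τ + 1 ≤ j
    · rw [if_pos (by omega), if_pos hc1, show j - τ = (j - (τ + 1)) + 1 by omega]
      exact bstep _
    · by_cases hc2 : τ ≤ j
      · have hτ : τ = j := by omega
        rw [if_pos hc2, if_neg hc1, hτ, Nat.sub_self, hb0,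
          show j + 1 - j - 1 = 0 by omega, hf0]
        exact he
      · rw [if_neg hc2, if_neg hc1, show τ + 1 - j - 1 = (τ - j - 1) + 1 by omega]
        exact fstep _
  have hlt1 : n + j - 1 < n + s + m := by omega
  have hlt2 : n + j < n + s + m := by omega
  refine ⟨fun a => ψ a.val, ?_, ⟨n + j - 1, hlt1⟩, ⟨n + j, hlt2⟩, ⟨?_, ?_, ?_⟩, ?_, ?_⟩
  · intro a b hab
    rcases hab with ⟨hb1, hb2⟩ | ⟨ha, hb⟩ | ⟨ha, hb⟩ | ⟨ha, hb⟩
    · by_cases hc : a.val < n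
      · have hbn : a.val + 1 < n := by omega
        simp only [hψ, hb1]
        rw [if_pos hc, if_pos hbn, succ_mod_aux _ _ hN]
        have hr : a.val % (j - i) < j - i := Nat.mod_lt _ hN
        rcases eq_or_ne (a.val % (j - i) + 1) (j - i) with hc2 | hc2
        · rw [if_pos hc2, Nat.sub_zero, show j - a.val % (j - i) = i + 1 by omega, ← hbij]
          exact bstep i
        · rw [if_neg hc2,
            show j - a.val % (j - i) = (j - (a.val % (j - i) + 1)) + 1 by omega]
          exact bstep _
      · simp only [hψ, hb1]
        rw [if_neg hc, if_neg (show ¬ (a.val + 1 < n) by omega),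
          show a.val + 1 - n + 1 = (a.val - n + 1) + 1 by omega]
        exact stepC _
    · simp only [hψ, ha, hb]
      rw [if_pos (show n - 1 < n by omega), if_pos hn, Nat.zero_mod, Nat.sub_zero]
      have hnm : n % (j - i) = 0 := by
        obtain ⟨c, rfl⟩ := hNn; exact Nat.mul_mod_right _ _
      have h6 := succ_mod_aux (j - i) (n - 1) hN
      rw [show n - 1 + 1 = n by omega, hnm] at h6
      have hcond : (n - 1) % (j - i) + 1 = j - i := by
        by_cases hx : (n - 1) % (j - i) + 1 = j - i
        · exact hx
        · rw [if_neg hx] at h6; omega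
      rw [show j - (n - 1) % (j - i) = i + 1 by omega, ← hbij]
      exact bstep i
    · simp only [hψ, ha, hb]
      rw [if_pos hn, if_neg (lt_irrefl n), Nat.zero_mod, Nat.sub_zero,
        show n - n + 1 = 1 by omega, if_pos hj1]
      have h7 := bstep (j - 1)
      rwa [show j - 1 + 1 = j by omega] at h7
    · simp only [hψ, ha, hb]
      rw [if_neg (show ¬ (n + s + m - 1 < n) by omega), if_neg (show ¬ (n + s < n) by omega),
        show n + s + m - 1 - n + 1 = s + m by omega, show n + s - n + 1 = s + 1 by omega,
        if_neg (show ¬ (s + m ≤ j) by omega), if_neg (show ¬ (s + 1 ≤ j) by omega),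
        show s + 1 - j - 1 = s - j by omega]
      have hper : fs (s - j + m) = fs (s - j) := hfper (s - j) m (by omega) hMm
      have h8 := fstep (s + m - j - 1)
      rwa [show s + m - j - 1 + 1 = s - j + m by omega, hper] at h8
  · show n ≤ n + j - 1; omega
  · show n + j - 1 + 1 < n + s; omega
  · show n + j = n + j - 1 + 1; omega
  · show ψ (n + j - 1) = u
    simp only [hψ]
    rw [if_neg (show ¬ (n + j - 1 < n) by omega), show n + j - 1 - n + 1 = j by omega,
      if_pos le_rfl, Nat.sub_self]
    exact hb0
  · show ψ (n + j) = v
    simp only [hψ]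
    rw [if_neg (show ¬ (n + j < n) by omega), show n + j - n + 1 = j + 1 by omega,
      if_neg (show ¬ (j + 1 ≤ j) by omega), show j + 1 - j - 1 = 0 by omega]
    exact hf0
end

section
/- Let G be a finite digraph whose vertex set P is a partition of the Cantor space 2^ℕ into nonempty clopen sets, and suppose every vertex of G has an outgoing edge. Let X be the union of all vertices of G that have no incoming edge. Then there exists a homeomorphism f from 2^ℕ onto 2^ℕ \ X such that for all a, b ∈ P, there is an edge a → b in G if and only if f(a) ∩ b ≠ ∅. In particular, if every vertex of G also has an incoming edge, then f is a homeomorphism of 2^ℕ onto itself. -/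
open Set Topology

abbrev Cantor := ℕ → Bool


def cyl (n : ℕ) (v : Fin n → Bool) : Set Cantor := {σ | ∀ i : Fin n, σ i = v i}

lemma isClopen_coord (m : ℕ) (b : Bool) : IsClopen {σ : Cantor | σ m = b} := by
  have : {σ : Cantor | σ m = b} = (fun σ : Cantor => σ m) ⁻¹' {b} := rfl
  rw [this]
  exact (isClopen_discrete {b}).preimage (continuous_apply m)

lemma isClopen_cyl (n : ℕ) (v : Fin n → Bool) : IsClopen (cyl n v) := by
  have : cyl n v = ⋂ i : Fin n, {σ : Cantor | σ i = v i} := by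
    ext σ; simp [cyl]
  rw [this]
  exact isClopen_iInter_of_finite fun i => isClopen_coord i (v i)

/-- A clopen set only depends on finitely many coordinates. -/
lemma exists_depth (C : Set Cantor) (hC : IsClopen C) :
    ∃ n, ∀ σ τ : Cantor, (∀ i < n, σ i = τ i) → σ ∈ C → τ ∈ C := by
  classical
  have key : ∀ σ ∈ C, ∃ n, ∀ τ : Cantor, (∀ i < n, τ i = σ i) → τ ∈ C := by
    intro σ hσ
    obtain ⟨I, u, hu, hsub⟩ := (isOpen_pi_iff.mp hC.2) σ hσ
    rcases I.eq_empty_or_nonempty with h | h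
    · exact ⟨0, fun τ _ => hsub (by simp [h, Set.pi])⟩
    · refine ⟨(I.max' h) + 1, fun τ hτ => hsub ?_⟩
      intro i hi
      have : τ i = σ i := hτ i (Nat.lt_succ_of_le (I.le_max' i hi))
      rw [this]; exact (hu i hi).2
  choose! N hN using key
  have hCc : IsCompact C := hC.1.isCompact
  have hcover : C ⊆ ⋃ σ ∈ C, {τ : Cantor | ∀ i < N σ, τ i = σ i} := by
    intro σ hσ
    exact mem_iUnion₂.mpr ⟨σ, hσ, fun i _ => rfl⟩
  have hopen : ∀ σ ∈ C, IsOpen {τ : Cantor | ∀ i < N σ, τ i = σ i} := by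
    intro σ _
    have : {τ : Cantor | ∀ i < N σ, τ i = σ i}
        = ⋂ i : Fin (N σ), {τ : Cantor | τ i.1 = σ i.1} := by
      ext τ
      simp only [Set.mem_setOf_eq, Set.mem_iInter]
      exact ⟨fun h i => h i.1 i.2, fun h i hi => h ⟨i, hi⟩⟩
    rw [this]
    exact isOpen_iInter_of_finite fun i => (isClopen_coord i.1 (σ i.1)).2
  obtain ⟨tf, htsub, htf, hsub⟩ := hCc.elim_finite_subcover_image hopen hcover
  refine ⟨(htf.toFinset.sup N) + 1, fun σ τ hagree hσ => ?_⟩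
  obtain ⟨ρ, hρmem, hρ⟩ := mem_iUnion₂.mp (hsub hσ)
  have hρC : ρ ∈ C := htsub hρmem
  have hNρ : N ρ < (htf.toFinset.sup N) + 1 :=
    Nat.lt_succ_of_le (Finset.le_sup (htf.mem_toFinset.mpr hρmem))
  refine hN ρ hρC τ fun i hi => ?_
  have h1 : τ i = σ i := (hagree i (lt_trans hi hNρ)).symm
  rw [h1]; exact hρ i hi


noncomputable def cylHomeo (n : ℕ) (v : Fin n → Bool) : Cantor ≃ₜ (cyl n v) := by
  refine Continuous.homeoOfEquivCompactToT2 (f := ⟨?_, ?_, ?_, ?_⟩) ?_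
  · exact fun σ => ⟨fun i => if h : i < n then v ⟨i, h⟩ else σ (i - n),
      fun i => by simp [i.2]⟩
  · exact fun τ i => τ.1 (i + n)
  · intro σ
    funext i
    simp only []
    rw [dif_neg (by omega)]
    congr 1; omega
  · intro τ
    ext i
    simp only []
    by_cases h : i < n
    · rw [dif_pos h]; exact (τ.2 ⟨i, h⟩).symm
    · rw [dif_neg h]
      have he : i - n + n = i := by omega
      rw [he]
  · refine Continuous.subtype_mk ?_ _
    refine continuous_pi fun i => ?_
    by_cases h : i < n
    · simp only [dif_pos h]; exact continuous_const
    · simp only [dif_neg h]; exact continuous_apply _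


lemma glue {I : Type} [Finite I] (D R : I → Set Cantor) (A B : Set Cantor)
    (hD : ∀ i, IsClopen (D i)) (hR : ∀ i, IsClopen (R i))
    (hDd : ∀ i j, i ≠ j → Disjoint (D i) (D j))
    (hRd : ∀ i j, i ≠ j → Disjoint (R i) (R j))
    (hDu : ⋃ i, D i = A) (hRu : ⋃ i, R i = B)
    (h : ∀ i, (D i) ≃ₜ (R i)) :
    ∃ f : A ≃ₜ B, ∀ (i : I) (σ : A), (σ : Cantor) ∈ D i ↔ ((f σ : Cantor) ∈ R i) := by
  classical
  have hA : IsClopen A := hDu ▸ isClopen_iUnion_of_finite hD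
  have hB : IsClopen B := hRu ▸ isClopen_iUnion_of_finite hR
  haveI : CompactSpace A := isCompact_iff_compactSpace.mp hA.1.isCompact
  -- uniqueness of index
  have huD : ∀ (σ : Cantor) (i j : I), σ ∈ D i → σ ∈ D j → i = j := by
    intro σ i j hi hj
    by_contra hne
    exact (hDd i j hne).le_bot ⟨hi, hj⟩ |>.elim
  have huR : ∀ (σ : Cantor) (i j : I), σ ∈ R i → σ ∈ R j → i = j := by
    intro σ i j hi hj
    by_contra hne
    exact (hRd i j hne).le_bot ⟨hi, hj⟩ |>.elim
  have hmemD : ∀ σ : A, ∃ i, (σ : Cantor) ∈ D i := fun σ =>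
    mem_iUnion.mp (hDu ▸ σ.2)
  -- forward function
  let idx : A → I := fun σ => (hmemD σ).choose
  have hidx : ∀ σ : A, (σ : Cantor) ∈ D (idx σ) := fun σ => (hmemD σ).choose_spec
  have hidx_eq : ∀ (σ : A) (i : I), (σ : Cantor) ∈ D i → idx σ = i :=
    fun σ i hi => huD σ _ _ (hidx σ) hi
  let F : A → B := fun σ =>
    ⟨((h (idx σ)) ⟨σ, hidx σ⟩ : Cantor), hRu ▸ mem_iUnion.mpr ⟨idx σ, ((h (idx σ)) ⟨σ, hidx σ⟩).2⟩⟩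
  have hFmem : ∀ (σ : A), (F σ : Cantor) ∈ R (idx σ) := fun σ => ((h (idx σ)) ⟨σ, hidx σ⟩).2
  have hFval : ∀ (σ : A) (i : I) (hi : (σ : Cantor) ∈ D i),
      (F σ : Cantor) = ((h i) ⟨σ, hi⟩ : Cantor) := by
    intro σ i hi
    have : idx σ = i := hidx_eq σ i hi
    subst this
    rfl
  -- injectivity
  have hinj : Function.Injective F := by
    intro σ τ hFeq
    have hi : idx σ = idx τ := huR _ _ _ (hFmem σ) (by rw [Subtype.ext_iff] at hFeq; rw [hFeq]; exact hFmem τ)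
    have : ((h (idx σ)) ⟨σ, hidx σ⟩ : Cantor) = ((h (idx σ)) ⟨τ, hi ▸ hidx τ⟩ : Cantor) := by
      rw [Subtype.ext_iff] at hFeq
      rw [hFval σ (idx σ) (hidx σ)] at hFeq
      rw [hFval τ (idx σ) (hi ▸ hidx τ)] at hFeq
      exact hFeq
    have := (h (idx σ)).injective (Subtype.ext this)
    have h2 := Subtype.ext_iff.mp this
    exact Subtype.ext h2
  -- surjectivity
  have hsurj : Function.Surjective F := by
    intro τ
    have hτB : (τ : Cantor) ∈ ⋃ i, R i := by rw [hRu]; exact τ.2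
    obtain ⟨i, hi⟩ := mem_iUnion.mp hτB
    obtain ⟨σ, hσ⟩ : ∃ σ : D i, ((h i) σ : Cantor) = (τ : Cantor) := by
      obtain ⟨σ, hσ⟩ := (h i).surjective ⟨(τ : Cantor), hi⟩
      exact ⟨σ, by rw [hσ]⟩
    have hσA : (σ : Cantor) ∈ A := hDu ▸ mem_iUnion.mpr ⟨i, σ.2⟩
    refine ⟨⟨σ, hσA⟩, ?_⟩
    apply Subtype.ext
    rw [hFval ⟨σ, hσA⟩ i σ.2]
    simpa using hσ
  -- continuity
  have hcont : Continuous F := by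
    rw [continuous_iff_continuousAt]
    intro σ
    have hopen : IsOpen ((Subtype.val : A → Cantor) ⁻¹' (D (idx σ))) :=
      (hD (idx σ)).2.preimage continuous_subtype_val
    have hmem : ((Subtype.val : A → Cantor) ⁻¹' (D (idx σ))) ∈ 𝓝 σ :=
      hopen.mem_nhds (hidx σ)
    refine ContinuousOn.continuousAt ?_ hmem
    rw [continuousOn_iff_continuous_restrict]
    set i := idx σ
    have : restrict _ F = fun τ : ((Subtype.val : A → Cantor) ⁻¹' (D i)) =>
        (⟨((h i) ⟨(τ : A), τ.2⟩ : Cantor),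
          hRu ▸ mem_iUnion.mpr ⟨i, ((h i) ⟨(τ : A), τ.2⟩).2⟩⟩ : B) := by
      funext τ
      apply Subtype.ext
      exact hFval (τ : A) i τ.2
    change Continuous (restrict _ F)
    rw [this]
    refine Continuous.subtype_mk ?_ _
    have c1 : Continuous fun τ : ((Subtype.val : A → Cantor) ⁻¹' (D i)) =>
        (⟨(τ : A), τ.2⟩ : D i) :=
      Continuous.subtype_mk (continuous_subtype_val.comp continuous_subtype_val) _
    exact continuous_subtype_val.comp ((h i).continuous.comp c1)
  let f : A ≃ₜ B := Continuous.homeoOfEquivCompactToT2 (f := Equiv.ofBijective F ⟨hinj, hsurj⟩) hcont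
  refine ⟨f, fun i σ => ?_⟩
  constructor
  · intro hσ
    have : (f σ : Cantor) = ((h i) ⟨σ, hσ⟩ : Cantor) := hFval σ i hσ
    rw [this]
    exact ((h i) ⟨σ, hσ⟩).2
  · intro hσ
    have h1 : (f σ : Cantor) ∈ R (idx σ) := hFmem σ
    have : idx σ = i := huR _ _ _ h1 hσ
    rw [← this]
    exact hidx σ


-- assume previous results
lemma cyl_disjoint {n : ℕ} {v w : Fin n → Bool} (hvw : v ≠ w) :
    Disjoint (cyl n v) (cyl n w) := by
  rw [Set.disjoint_left]
  intro σ hv hw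
  exact hvw (funext fun i => (hv i).symm.trans (hw i))

/-- combining two disjoint clopen copies of Cantor space -/
lemma union_homeo {C₁ C₂ : Set Cantor} (h1 : IsClopen C₁) (h2 : IsClopen C₂)
    (hd : Disjoint C₁ C₂) (e1 : Cantor ≃ₜ C₁) (e2 : Cantor ≃ₜ C₂) :
    Nonempty (Cantor ≃ₜ (C₁ ∪ C₂ : Set Cantor)) := by
  classical
  let D : Bool → Set Cantor := fun b => cyl 1 (fun _ => b)
  let R : Bool → Set Cantor := fun b => bif b then C₂ else C₁
  have hDu : ⋃ b, D b = univ := by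
    ext σ
    simp only [mem_iUnion, mem_univ, iff_true]
    exact ⟨σ 0, fun i => by fin_cases i <;> rfl⟩
  have hRu : ⋃ b, R b = C₁ ∪ C₂ := by
    ext σ
    simp only [mem_iUnion, mem_union]
    constructor
    · rintro ⟨b, hb⟩; cases b
      · exact Or.inl hb
      · exact Or.inr hb
    · rintro (hσ | hσ)
      · exact ⟨false, hσ⟩
      · exact ⟨true, hσ⟩
  obtain ⟨f, -⟩ := glue D R univ (C₁ ∪ C₂)
    (fun b => isClopen_cyl 1 _)
    (fun b => by cases b <;> simpa [R])
    (fun i j hij => cyl_disjoint (fun h => hij (congrFun h ⟨0, one_pos⟩)))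
    (fun i j hij => by
      cases i <;> cases j
      · exact absurd rfl hij
      · exact hd
      · exact hd.symm
      · exact absurd rfl hij)
    hDu hRu
    (fun b => by
      cases b
      · exact ((cylHomeo 1 _).symm.trans e1)
      · exact ((cylHomeo 1 _).symm.trans e2))
  exact ⟨(Homeomorph.Set.univ Cantor).symm.trans f⟩

lemma unions_of_cyls (n : ℕ) (S : Finset (Fin n → Bool)) (hS : S.Nonempty) :
    Nonempty (Cantor ≃ₜ (⋃ v ∈ S, cyl n v : Set Cantor)) := by
  classical
  induction hS using Finset.Nonempty.cons_induction with
  | singleton v =>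
      have : (⋃ w ∈ ({v} : Finset (Fin n → Bool)), cyl n w) = cyl n v := by simp
      exact ⟨(cylHomeo n v).trans (Homeomorph.setCongr this.symm)⟩
  | cons a S ha hS ih =>
      obtain ⟨e⟩ := ih
      have hset : (⋃ w ∈ Finset.cons a S ha, cyl n w) = cyl n a ∪ (⋃ w ∈ S, cyl n w) := by
        simp [Finset.cons_eq_insert, Set.iUnion_iUnion_eq_or_left]
      have hd : Disjoint (cyl n a) (⋃ w ∈ S, cyl n w) := by
        rw [Set.disjoint_iUnion₂_right]
        intro w hw
        exact cyl_disjoint (fun h => ha (h ▸ hw))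
      have hclop : IsClopen (⋃ w ∈ S, cyl n w) := by
        exact (S.finite_toSet).isClopen_biUnion fun i _ => isClopen_cyl n i
      obtain ⟨f⟩ := union_homeo (isClopen_cyl n a) hclop hd (cylHomeo n a) e
      exact ⟨f.trans (Homeomorph.setCongr hset.symm)⟩

/-- Every nonempty clopen subset of Cantor space is homeomorphic to Cantor space. -/
lemma homeo_clopen (C : Set Cantor) (h1 : IsClopen C) (h2 : C.Nonempty) :
    Nonempty (Cantor ≃ₜ C) := by
  classical
  obtain ⟨n, hn⟩ := exists_depth C h1
  set ext : (Fin n → Bool) → Cantor := fun v i => if h : i < n then v ⟨i, h⟩ else false with hext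
  set S : Finset (Fin n → Bool) := Finset.univ.filter (fun v => ext v ∈ C) with hSdef
  have hrep : C = ⋃ v ∈ S, cyl n v := by
    ext σ
    simp only [mem_iUnion, Finset.mem_filter, Finset.mem_univ, true_and, hSdef]
    constructor
    · intro hσ
      refine ⟨fun i => σ i, ?_, fun i => rfl⟩
      exact hn σ _ (fun i hi => by simp [hext, hi]) hσ
    · rintro ⟨v, hv, hσv⟩
      exact hn (ext v) σ (fun i hi => by simp [hext, hi, (hσv ⟨i, hi⟩).symm]) hv
  have hSne : S.Nonempty := by
    obtain ⟨σ, hσ⟩ := h2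
    rw [hrep] at hσ
    simp only [mem_iUnion] at hσ
    obtain ⟨v, hv, -⟩ := hσ
    exact ⟨v, hv⟩
  obtain ⟨f⟩ := unions_of_cyls n S hSne
  exact ⟨f.trans (Homeomorph.setCongr hrep.symm)⟩

/-- Partition of Cantor space into k+1 clopen nonempty pieces. -/
def Q (k : ℕ) (j : Fin (k + 1)) : Set Cantor :=
  {σ | (∀ i < j.1, σ i = true) ∧ (j.1 < k → σ j.1 = false)}

lemma Q_clopen (k : ℕ) (j : Fin (k + 1)) : IsClopen (Q k j) := by
  have : Q k j = (⋂ i : Fin j.1, {σ : Cantor | σ i.1 = true}) ∩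
      (if h : j.1 < k then {σ : Cantor | σ j.1 = false} else univ) := by
    ext σ
    simp only [Q, mem_setOf_eq, mem_inter_iff, mem_iInter]
    constructor
    · rintro ⟨h1, h2⟩
      refine ⟨fun i => h1 i.1 i.2, ?_⟩
      by_cases h : j.1 < k
      · rw [dif_pos h]; exact h2 h
      · rw [dif_neg h]; trivial
    · rintro ⟨h1, h2⟩
      refine ⟨fun i hi => h1 ⟨i, hi⟩, fun h => ?_⟩
      rw [dif_pos h] at h2; exact h2
  rw [this]
  refine IsClopen.inter (isClopen_iInter_of_finite fun i => isClopen_coord i.1 true) ?_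
  by_cases h : j.1 < k
  · rw [dif_pos h]; exact isClopen_coord j.1 false
  · rw [dif_neg h]; exact isClopen_univ

lemma Q_nonempty (k : ℕ) (j : Fin (k + 1)) : (Q k j).Nonempty := by
  refine ⟨fun i => decide (i < j.1), ?_, ?_⟩
  · intro i hi; simp [hi]
  · intro _; simp

lemma Q_disjoint (k : ℕ) : ∀ i j : Fin (k+1), i ≠ j → Disjoint (Q k i) (Q k j) := by
  have key : ∀ i j : Fin (k+1), i.1 < j.1 → Disjoint (Q k i) (Q k j) := by
    intro i j hij
    rw [Set.disjoint_left]
    rintro σ ⟨-, hi2⟩ ⟨hj1, -⟩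
    have hik : i.1 < k := lt_of_lt_of_le hij (Nat.lt_succ_iff.mp j.2)
    have := hj1 i.1 hij
    rw [hi2 hik] at this
    exact Bool.false_ne_true this
  intro i j hij
  rcases lt_or_gt_of_ne (fun h => hij (Fin.ext h) : i.1 ≠ j.1) with h | h
  · exact key i j h
  · exact (key j i h).symm

lemma Q_union (k : ℕ) : ⋃ j, Q k j = (univ : Set Cantor) := by
  classical
  ext σ
  simp only [mem_iUnion, mem_univ, iff_true]
  by_cases h : ∃ i, i < k ∧ σ i = false
  · obtain ⟨i, hik, hi⟩ := h
    -- least such i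
    have hex : ∃ i, i < k ∧ σ i = false := ⟨i, hik, hi⟩
    set m := Nat.find hex with hm
    obtain ⟨hmk, hmf⟩ := Nat.find_spec hex
    refine ⟨⟨m, Nat.lt_succ_of_lt hmk⟩, ?_, ?_⟩
    · intro i him
      by_contra hne
      exact Nat.find_min hex him ⟨lt_trans him hmk, by simpa using hne⟩
    · intro _; exact hmf
  · push_neg at h
    refine ⟨⟨k, Nat.lt_succ_self k⟩, ?_, ?_⟩
    · intro i hik
      exact Bool.ne_false_iff.mp (h i hik)
    · intro hkk; exact absurd hkk (lt_irrefl k)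

/-- Partition an arbitrary nonempty clopen set along a nonempty "subset" of a finite type. -/
lemma partition_clopen (C : Set Cantor) (h1 : IsClopen C) (h2 : C.Nonempty)
    (ι : Type) [Finite ι] (s : Set ι) (hs : s.Nonempty) :
    ∃ F : ι → Set Cantor,
      (∀ j ∈ s, IsClopen (F j) ∧ (F j).Nonempty) ∧
      (∀ j ∈ s, ∀ j' ∈ s, j ≠ j' → Disjoint (F j) (F j')) ∧
      (⋃ j ∈ s, F j) = C := by
  classical
  obtain ⟨e⟩ := homeo_clopen C h1 h2
  set φ : Cantor → Cantor := fun σ => (e σ : Cantor) with hφ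
  have hφinj : Function.Injective φ := fun a b hab =>
    e.injective (Subtype.ext hab)
  have hφrange : range φ = C := by
    ext σ
    constructor
    · rintro ⟨τ, rfl⟩; exact (e τ).2
    · intro hσ
      exact ⟨e.symm ⟨σ, hσ⟩, by simp [hφ]⟩
  have hφclopen : ∀ U : Set Cantor, IsClopen U → IsClopen (φ '' U) := by
    intro U hU
    have h3 : φ '' U = Subtype.val '' ((e.symm) ⁻¹' U) := by
      ext σ
      simp only [mem_image, mem_preimage]
      constructor
      · rintro ⟨τ, hτ, rfl⟩; exact ⟨e τ, by simpa using hτ, rfl⟩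
      · rintro ⟨τ, hτ, rfl⟩; exact ⟨e.symm τ, hτ, by simp [hφ]⟩
    rw [h3]
    have hcl : IsClopen ((e.symm) ⁻¹' U : Set C) := hU.preimage e.symm.continuous
    constructor
    · exact (h1.1.isClosedEmbedding_subtypeVal.isClosedMap _ hcl.1)
    · exact (h1.2.isOpenMap_subtype_val _ hcl.2)
  -- index equiv
  haveI : Fintype ι := Fintype.ofFinite ι
  haveI : Fintype s := Set.Finite.fintype (Set.toFinite s)
  have hcard : ∃ k, Fintype.card s = k + 1 := by
    have : 0 < Fintype.card s := Fintype.card_pos_iff.mpr (hs.to_subtype)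
    exact ⟨Fintype.card s - 1, by omega⟩
  obtain ⟨k, hk⟩ := hcard
  set ee : s ≃ Fin (k+1) := (Fintype.equivFin s).trans (finCongr hk)
  refine ⟨fun j => if h : j ∈ s then φ '' Q k (ee ⟨j, h⟩) else ∅, ?_, ?_, ?_⟩
  · intro j hj
    simp only [dif_pos hj]
    exact ⟨hφclopen _ (Q_clopen k _), ((Q_nonempty k _).image φ)⟩
  · intro j hj j' hj' hne
    simp only [dif_pos hj, dif_pos hj']
    refine (Set.disjoint_image_iff hφinj).mpr (Q_disjoint k _ _ ?_)
    intro h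
    exact hne (by simpa using Subtype.ext_iff.mp (ee.injective h))
  · ext σ
    simp only [mem_iUnion]
    constructor
    · rintro ⟨j, hj, hσ⟩
      simp only [dif_pos hj] at hσ
      obtain ⟨τ, -, rfl⟩ := hσ
      rw [← hφrange]; exact ⟨τ, rfl⟩
    · intro hσ
      rw [← hφrange] at hσ
      obtain ⟨τ, rfl⟩ := hσ
      have : τ ∈ ⋃ j, Q k j := by rw [Q_union]; trivial
      obtain ⟨i, hi⟩ := mem_iUnion.mp this
      refine ⟨(ee.symm i).1, (ee.symm i).2, ?_⟩
      simp only [dif_pos (ee.symm i).2]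
      refine ⟨τ, ?_, rfl⟩
      have : ee ⟨(ee.symm i).1, (ee.symm i).2⟩ = i := by
        simpa using ee.apply_symm_apply i
      rw [this]; exact hi



theorem graph_realization (P : Finset (Set (ℕ → Bool))) (hP : IsPartition P)
    (E : {a // a ∈ P} → {a // a ∈ P} → Prop)
    (hE : ∀ a, ∃ b, E a b)
    (X : Set (ℕ → Bool))
    (hX : X = ⋃ a : {a // a ∈ P}, ⋃ _ : (∀ b, ¬ E b a), a.val) :
    (∃ f : (ℕ → Bool) ≃ₜ (Set.univ \ X : Set (ℕ → Bool)),
      ∀ a b : {a // a ∈ P},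
        E a b ↔ ((fun σ => ((f σ : (Set.univ \ X : Set (ℕ → Bool))) : ℕ → Bool)) '' a.val ∩ b.val).Nonempty) ∧
    ((∀ a, ∃ b, E b a) → ∃ g : (ℕ → Bool) ≃ₜ (ℕ → Bool),
      ∀ a b : {a // a ∈ P}, E a b ↔ gammaEdge (⇑g) a.val b.val) := by
  classical
  -- basic facts about the partition
  have hclop : ∀ a : {a // a ∈ P}, IsClopen a.1 := fun a => (hP.1 a.1 a.2).1
  have hne : ∀ a : {a // a ∈ P}, a.1.Nonempty := fun a => (hP.1 a.1 a.2).2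
  have hdisj : ∀ a b : {a // a ∈ P}, a ≠ b → Disjoint a.1 b.1 := by
    intro a b hab
    exact hP.2.1 a.1 a.2 b.1 b.2 (fun h => hab (Subtype.ext h))
  have hcover : ∀ σ : Cantor, ∃ a : {a // a ∈ P}, σ ∈ a.1 := by
    intro σ
    have : σ ∈ ⋃₀ (P : Set (Set Cantor)) := hP.2.2 ▸ mem_univ σ
    obtain ⟨t, ht, hσt⟩ := this
    exact ⟨⟨t, ht⟩, hσt⟩
  have hsame : ∀ (σ : Cantor) (a b : {a // a ∈ P}), σ ∈ a.1 → σ ∈ b.1 → a = b := by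
    intro σ a b ha hb
    by_contra hab
    exact (hdisj a b hab).le_bot ⟨ha, hb⟩
  -- domain pieces
  have hdom : ∀ a : {a // a ∈ P}, ∃ F : {a // a ∈ P} → Set Cantor,
      (∀ b ∈ {b | E a b}, IsClopen (F b) ∧ (F b).Nonempty) ∧
      (∀ b ∈ {b | E a b}, ∀ b' ∈ {b | E a b}, b ≠ b' → Disjoint (F b) (F b')) ∧
      (⋃ b ∈ {b | E a b}, F b) = a.1 :=
    fun a => partition_clopen a.1 (hclop a) (hne a) {a // a ∈ P} {b | E a b} (by obtain ⟨b, hb⟩ := hE a; exact ⟨b, hb⟩)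
  choose Fd hFd1 hFd2 hFd3 using hdom
  -- codomain pieces
  have hcod : ∀ b : {a // a ∈ P}, ∃ G : {a // a ∈ P} → Set Cantor, (∃ a, E a b) →
      ((∀ a ∈ {a | E a b}, IsClopen (G a) ∧ (G a).Nonempty) ∧
      (∀ a ∈ {a | E a b}, ∀ a' ∈ {a | E a b}, a ≠ a' → Disjoint (G a) (G a')) ∧
      (⋃ a ∈ {a | E a b}, G a) = b.1) := by
    intro b
    by_cases h : ∃ a, E a b
    · obtain ⟨G, hG⟩ := partition_clopen b.1 (hclop b) (hne b) {a // a ∈ P} {a | E a b} h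
      exact ⟨G, fun _ => hG⟩
    · exact ⟨fun _ => ∅, fun h' => absurd h' h⟩
  choose G hG using hcod
  -- edge index type
  set Edg := {p : {a // a ∈ P} × {a // a ∈ P} // E p.1 p.2} with hEdg
  haveI : Finite Edg := Subtype.finite
  set D : Edg → Set Cantor := fun e => Fd e.1.1 e.1.2 with hD
  set R : Edg → Set Cantor := fun e => G e.1.2 e.1.1 with hR
  -- piece inclusions
  have hDsub : ∀ e : Edg, D e ⊆ e.1.1.1 := by
    intro e
    rw [← hFd3 e.1.1]
    exact subset_biUnion_of_mem (u := fun b => Fd e.1.1 b) e.2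
  have hRsub : ∀ e : Edg, R e ⊆ e.1.2.1 := by
    intro e
    rw [← (hG e.1.2 ⟨e.1.1, e.2⟩).2.2]
    exact subset_biUnion_of_mem (u := fun a => G e.1.2 a) e.2
  have hDclop : ∀ e : Edg, IsClopen (D e) := fun e => (hFd1 e.1.1 e.1.2 e.2).1
  have hDne : ∀ e : Edg, (D e).Nonempty := fun e => (hFd1 e.1.1 e.1.2 e.2).2
  have hRclop : ∀ e : Edg, IsClopen (R e) :=
    fun e => ((hG e.1.2 ⟨e.1.1, e.2⟩).1 e.1.1 e.2).1
  have hRne : ∀ e : Edg, (R e).Nonempty :=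
    fun e => ((hG e.1.2 ⟨e.1.1, e.2⟩).1 e.1.1 e.2).2
  -- disjointness
  have hDd : ∀ e e' : Edg, e ≠ e' → Disjoint (D e) (D e') := by
    intro e e' hee
    by_cases h : e.1.1 = e'.1.1
    · have hb : e.1.2 ≠ e'.1.2 := by
        intro h2
        exact hee (Subtype.ext (Prod.ext h h2))
      have := hFd2 e.1.1 e.1.2 e.2 e'.1.2 (h ▸ e'.2) hb
      rw [hD]
      simpa [h] using this
    · exact Set.disjoint_of_subset (hDsub e) (hDsub e') (hdisj _ _ h)
  have hRd : ∀ e e' : Edg, e ≠ e' → Disjoint (R e) (R e') := by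
    intro e e' hee
    by_cases h : e.1.2 = e'.1.2
    · have ha : e.1.1 ≠ e'.1.1 := by
        intro h2
        exact hee (Subtype.ext (Prod.ext h2 h))
      have := (hG e.1.2 ⟨e.1.1, e.2⟩).2.1 e.1.1 e.2 e'.1.1 (h ▸ e'.2) ha
      rw [hR]
      simpa [h] using this
    · exact Set.disjoint_of_subset (hRsub e) (hRsub e') (hdisj _ _ h)
  -- unions
  have hDu : ⋃ e, D e = univ := by
    ext σ
    simp only [mem_iUnion, mem_univ, iff_true]
    obtain ⟨a, ha⟩ := hcover σ
    have : σ ∈ ⋃ b ∈ {b | E a b}, Fd a b := (hFd3 a) ▸ ha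
    simp only [mem_iUnion, mem_setOf_eq] at this
    obtain ⟨b, hab, hσ⟩ := this
    exact ⟨⟨(a, b), hab⟩, hσ⟩
  -- X is disjoint from vertices having predecessors
  have hXdisj : ∀ b : {a // a ∈ P}, (∃ a, E a b) → ∀ σ ∈ b.1, σ ∉ X := by
    intro b hb σ hσ hσX
    rw [hX] at hσX
    simp only [mem_iUnion] at hσX
    obtain ⟨a, hnopred, hσa⟩ := hσX
    have hab : a = b := hsame σ a b hσa hσ
    obtain ⟨c, hc⟩ := hb
    exact hnopred c (hab ▸ hc)
  have hRu : ⋃ e, R e = univ \ X := by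
    ext σ
    simp only [mem_iUnion, mem_diff, mem_univ, true_and]
    constructor
    · rintro ⟨e, hσ⟩
      exact hXdisj e.1.2 ⟨e.1.1, e.2⟩ σ (hRsub e hσ)
    · intro hσX
      obtain ⟨b, hb⟩ := hcover σ
      have hbpred : ∃ a, E a b := by
        by_contra h
        push_neg at h
        refine hσX ?_
        rw [hX]
        simp only [mem_iUnion]
        exact ⟨b, fun c => h c, hb⟩
      have : σ ∈ ⋃ a ∈ {a | E a b}, G b a := ((hG b hbpred).2.2) ▸ hb
      simp only [mem_iUnion, mem_setOf_eq] at this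
      obtain ⟨a, hab, hσ⟩ := this
      exact ⟨⟨(a, b), hab⟩, hσ⟩
  -- homeomorphisms between the pieces
  have hpiece : ∀ e : Edg, (D e) ≃ₜ (R e) := by
    intro e
    have h1 := (homeo_clopen (D e) (hDclop e) (hDne e)).some
    have h2 := (homeo_clopen (R e) (hRclop e) (hRne e)).some
    exact h1.symm.trans h2
  obtain ⟨f0, hf0⟩ := glue D R univ (univ \ X) hDclop hRclop hDd hRd hDu hRu hpiece
  set f : Cantor ≃ₜ (univ \ X : Set Cantor) :=
    (Homeomorph.Set.univ Cantor).symm.trans f0 with hf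
  -- the edge property for f
  have hedge : ∀ a b : {a // a ∈ P}, E a b ↔
      ((fun σ => ((f σ : (univ \ X : Set Cantor)) : Cantor)) '' a.1 ∩ b.1).Nonempty := by
    intro a b
    constructor
    · intro hab
      set e : Edg := ⟨(a, b), hab⟩
      obtain ⟨σ, hσ⟩ := hDne e
      have hσa : σ ∈ a.1 := hDsub e hσ
      have hmem : (f σ : Cantor) ∈ R e := by
        have := (hf0 e ⟨σ, mem_univ σ⟩).mp hσ
        exact this
      exact ⟨(f σ : Cantor), ⟨σ, hσa, rfl⟩, hRsub e hmem⟩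
    · rintro ⟨τ, ⟨σ, hσa, rfl⟩, hτb⟩
      have hσD : ∃ e : Edg, σ ∈ D e := by
        have : σ ∈ ⋃ e, D e := hDu ▸ mem_univ σ
        exact mem_iUnion.mp this
      obtain ⟨e, hσe⟩ := hσD
      have ha : e.1.1 = a := hsame σ e.1.1 a (hDsub e hσe) hσa
      have hfR : (f σ : Cantor) ∈ R e := (hf0 e ⟨σ, mem_univ σ⟩).mp hσe
      have hb : e.1.2 = b := hsame _ e.1.2 b (hRsub e hfR) hτb
      have := e.2
      rw [ha, hb] at this
      exact this
  refine ⟨⟨f, hedge⟩, ?_⟩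
  -- second part
  intro hall
  have hXempty : X = ∅ := by
    rw [hX]
    ext σ
    simp only [mem_iUnion, mem_empty_iff_false, iff_false, not_exists]
    intro a h _
    obtain ⟨b, hb⟩ := hall a
    exact h b hb
  have huniv : (univ \ X : Set Cantor) = univ := by rw [hXempty]; simp
  set g : Cantor ≃ₜ Cantor :=
    f.trans ((Homeomorph.setCongr huniv).trans (Homeomorph.Set.univ Cantor)) with hg
  refine ⟨g, fun a b => ?_⟩
  have hgf : ∀ σ, g σ = ((f σ : (univ \ X : Set Cantor)) : Cantor) := fun σ => rfl
  rw [gammaEdge]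
  have : ⇑g '' a.1 = (fun σ => ((f σ : (univ \ X : Set Cantor)) : Cantor)) '' a.1 := by
    apply image_congr
    intro σ _
    exact hgf σ
  rw [this]
  exact hedge a b
end

section
/- Let f be a continuous self-map of the Cantor space, let Q be a partition of the Cantor space, and let g be a continuous self-map and P a refinement of Q with refinement map ν such that for all a, b ∈ P, g(a) ∩ b ≠ ∅ implies f(ν(a)) ∩ ν(b) ≠ ∅. Then the uniform distance between f and g is at most mesh(Q) + mesh(f(Q)), where f(Q) = {f(a) : a ∈ Q}. -/
lemma cantorDist_nonneg (σ τ : ℕ → Bool) : 0 ≤ cantorDist σ τ := by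
  unfold cantorDist
  split <;> positivity

lemma cantorDist_le_one (σ τ : ℕ → Bool) : cantorDist σ τ ≤ 1 := by
  unfold cantorDist
  split
  · rw [div_le_one (by positivity)]
    push_cast; linarith [Nat.cast_nonneg (α := ℝ) (Nat.find ‹_›)]
  · norm_num

lemma cantorDist_self (σ : ℕ → Bool) : cantorDist σ σ = 0 := by
  unfold cantorDist
  rw [dif_neg]; push_neg; intro n; rfl

lemma cantorDist_ultra (x y z : ℕ → Bool) :
    cantorDist x z ≤ max (cantorDist x y) (cantorDist y z) := by
  classical
  unfold cantorDist
  split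
  case isTrue h =>
    set n := Nat.find h with hn
    have hne : x n ≠ y n ∨ y n ≠ z n := by
      by_contra hc
      push_neg at hc
      exact (Nat.find_spec h) (hc.1.trans hc.2)
    rcases hne with hxy | hyz
    · have h1 : ∃ m, x m ≠ y m := ⟨n, hxy⟩
      have hle : Nat.find h1 ≤ n := Nat.find_le hxy
      refine le_max_of_le_left ?_
      rw [dif_pos h1]
      apply one_div_le_one_div_of_le (by positivity)
      push_cast; exact_mod_cast Nat.add_le_add_right hle 1
    · have h1 : ∃ m, y m ≠ z m := ⟨n, hyz⟩
      have hle : Nat.find h1 ≤ n := Nat.find_le hyz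
      refine le_max_of_le_right ?_
      rw [dif_pos h1]
      apply one_div_le_one_div_of_le (by positivity)
      exact_mod_cast Nat.add_le_add_right hle 1
  case isFalse h =>
    exact le_max_of_le_left (cantorDist_nonneg x y)

lemma dist_le_cantorDiam {A : Set (ℕ → Bool)} {σ τ : ℕ → Bool}
    (hσ : σ ∈ A) (hτ : τ ∈ A) : cantorDist σ τ ≤ cantorDiam A := by
  apply le_csSup
  · exact ⟨1, fun r ⟨a, ha, b, hb, hr⟩ => hr ▸ cantorDist_le_one a b⟩
  · exact ⟨σ, hσ, τ, hτ, rfl⟩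

lemma cantorDiam_nonneg {A : Set (ℕ → Bool)} (h : A.Nonempty) : 0 ≤ cantorDiam A := by
  obtain ⟨σ, hσ⟩ := h
  have := dist_le_cantorDiam hσ hσ
  rwa [cantorDist_self] at this

lemma cantorDiam_le_one (A : Set (ℕ → Bool)) : cantorDiam A ≤ 1 :=
  Real.sSup_le (fun r ⟨a, _, b, _, hr⟩ => hr ▸ cantorDist_le_one a b) one_pos.le

lemma cantorDiam_le_mesh {C : Set (Set (ℕ → Bool))} {A : Set (ℕ → Bool)}
    (hA : A ∈ C) : cantorDiam A ≤ mesh C := by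
  apply le_csSup
  · exact ⟨1, fun r ⟨a, _, hr⟩ => hr ▸ cantorDiam_le_one a⟩
  · exact ⟨A, hA, rfl⟩

lemma mesh_nonneg {C : Set (Set (ℕ → Bool))} (h : ∃ A ∈ C, A.Nonempty) : 0 ≤ mesh C := by
  obtain ⟨A, hA, hne⟩ := h
  exact (cantorDiam_nonneg hne).trans (cantorDiam_le_mesh hA)

theorem approximation_distance
    (f g : (ℕ → Bool) → (ℕ → Bool)) (hf : Continuous f) (hg : Continuous g)
    (Q P : Finset (Set (ℕ → Bool))) (hQ : IsPartition Q) (hP : IsPartition P)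
    (ν : {a // a ∈ P} → {a // a ∈ Q})
    (hν : ∀ a : {a // a ∈ P}, a.val ⊆ (ν a).val)
    (hedge : ∀ a b : {a // a ∈ P}, gammaEdge g a.val b.val →
      gammaEdge f (ν a).val (ν b).val) :
    ∀ σ : ℕ → Bool, cantorDist (f σ) (g σ) ≤
      mesh (↑Q : Set (Set (ℕ → Bool))) +
      mesh ((fun A => f '' A) '' (↑Q : Set (Set (ℕ → Bool)))) := by
  intro σ
  -- find a ∈ P containing σ
  have hcov := hP.2.2
  have hσ : σ ∈ ⋃₀ (P : Set (Set (ℕ → Bool))) := hcov ▸ Set.mem_univ σ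
  obtain ⟨a, haP, hσa⟩ := hσ
  have hgσ : g σ ∈ ⋃₀ (P : Set (Set (ℕ → Bool))) := hcov ▸ Set.mem_univ (g σ)
  obtain ⟨b, hbP, hgb⟩ := hgσ
  have hedg : gammaEdge g a b := ⟨g σ, ⟨σ, hσa, rfl⟩, hgb⟩
  obtain ⟨y, ⟨τ, hτ, rfl⟩, hyb⟩ := hedge ⟨a, haP⟩ ⟨b, hbP⟩ hedg
  -- σ ∈ ν ⟨a, haP⟩, g σ ∈ ν ⟨b, hbP⟩
  have hσνa : σ ∈ (ν ⟨a, haP⟩).val := hν _ hσa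
  have hgνb : g σ ∈ (ν ⟨b, hbP⟩).val := hν _ hgb
  set A := (ν ⟨a, haP⟩).val
  set B := (ν ⟨b, hbP⟩).val
  have hAQ : A ∈ (Q : Set (Set (ℕ → Bool))) := (ν ⟨a, haP⟩).2
  have hBQ : B ∈ (Q : Set (Set (ℕ → Bool))) := (ν ⟨b, hbP⟩).2
  have h1 : cantorDist (f σ) (f τ) ≤ mesh ((fun A => f '' A) '' (↑Q : Set (Set (ℕ → Bool)))) :=
    (dist_le_cantorDiam (A := f '' A) ⟨σ, hσνa, rfl⟩ ⟨τ, hτ, rfl⟩).trans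
      (cantorDiam_le_mesh ⟨A, hAQ, rfl⟩)
  have h2 : cantorDist (f τ) (g σ) ≤ mesh (↑Q : Set (Set (ℕ → Bool))) :=
    (dist_le_cantorDiam hyb hgνb).trans (cantorDiam_le_mesh hBQ)
  have hm1 : 0 ≤ mesh (↑Q : Set (Set (ℕ → Bool))) :=
    mesh_nonneg ⟨A, hAQ, σ, hσνa⟩
  have hm2 : 0 ≤ mesh ((fun A => f '' A) '' (↑Q : Set (Set (ℕ → Bool)))) :=
    mesh_nonneg ⟨f '' A, ⟨A, hAQ, rfl⟩, f σ, σ, hσνa, rfl⟩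
  calc cantorDist (f σ) (g σ)
      ≤ max (cantorDist (f σ) (f τ)) (cantorDist (f τ) (g σ)) := cantorDist_ultra _ _ _
    _ ≤ _ := max_le (by linarith) (by linarith)
end

section
/- Let f be a homeomorphism of the Cantor space and ε > 0. There exist positive integers K, N, S and M such that for all k ≥ K, s ≥ S, and all positive integer multiples n of N and m of M, there are a homeomorphism g of the Cantor space and a partition P with mesh(P) < ε and uniform distance between f and g less than ε, such that the digraph Γ(g,P) consists of exactly k disjoint dumbbells of type (n,s,m). -/
section Basics
open Function Classical

abbrev XC := ℕ → Bool

/-- restriction to first `M` coordinates -/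
def resN (M : ℕ) (σ : XC) : Fin M → Bool := fun i => σ i.val

/-- extend a finite word by `false` -/
def extN {M : ℕ} (v : Fin M → Bool) : XC := fun p => if h : p < M then v ⟨p, h⟩ else false

/-- generic restriction/padding between finite levels -/
def prW (A B : ℕ) (x : Fin B → Bool) : Fin A → Bool :=
  fun i => if h : i.val < B then x ⟨i.val, h⟩ else false

lemma resN_extN {M : ℕ} (v : Fin M → Bool) : resN M (extN v) = v := by
  funext i; simp [resN, extN, i.isLt]

lemma resN_extN_le {A M : ℕ} (h : A ≤ M) (v : Fin M → Bool) :
    resN A (extN v) = prW A M v := by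
  funext i; have : i.val < M := lt_of_lt_of_le i.isLt h
  simp [resN, extN, prW, this]

lemma prW_resN {A M : ℕ} (h : A ≤ M) (σ : XC) : prW A M (resN M σ) = resN A σ := by
  funext i; have : i.val < M := lt_of_lt_of_le i.isLt h
  simp [resN, prW, this]

lemma prW_prW {A B C : ℕ} (hAB : A ≤ B) (hBC : B ≤ C) (x : Fin C → Bool) :
    prW A B (prW B C x) = prW A C x := by
  funext i
  have h1 : i.val < B := lt_of_lt_of_le i.isLt hAB
  have h2 : i.val < C := lt_of_lt_of_le h1 hBC
  simp [prW, h1, h2]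

lemma resN_eq_iff {M : ℕ} (σ τ : XC) : resN M σ = resN M τ ↔ ∀ i < M, σ i = τ i := by
  constructor
  · intro h i hi; exact congrFun h ⟨i, hi⟩
  · intro h; funext i; exact h i.val i.isLt

/-- a map determined by finitely many coordinates is continuous -/
lemma continuous_of_det {γ : Type*} [TopologicalSpace γ] [DiscreteTopology γ] [Finite γ]
    (G : XC → γ) (M : ℕ) (h : ∀ σ τ, resN M σ = resN M τ → G σ = G τ) : Continuous G := by
  have hfac : G = (fun r : Fin M → Bool => G (extN r)) ∘ resN M := by
    funext σ
    exact h σ (extN (resN M σ)) (by rw [resN_extN])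
  rw [hfac]
  exact Continuous.comp continuous_of_discreteTopology
    (continuous_pi fun i => continuous_apply i.val)

lemma clopen_of_det {γ : Type*} (G : XC → γ) (M : ℕ)
    (h : ∀ σ τ, resN M σ = resN M τ → G σ = G τ) (d : γ) :
    IsClopen {σ : XC | G σ = d} := by
  classical
  -- use the map into Prop? better: into Bool-valued... use subtype trick:
  -- G' : XC → ULift Bool deciding G σ = d
  let G' : XC → Bool := fun σ => decide (G σ = d)
  have hdet : ∀ σ τ, resN M σ = resN M τ → G' σ = G' τ := fun σ τ hh => by
    simp only [G', h σ τ hh]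
  have hc : Continuous G' := continuous_of_det G' M hdet
  have : {σ : XC | G σ = d} = G' ⁻¹' {true} := by
    ext σ; simp [G']
  rw [this]
  exact (isClopen_discrete _).preimage hc

/-- uniform continuity: the first L coords of f σ depend on finitely many coords of σ -/
lemma exists_unif (f : XC → XC) (hf : Continuous f) (L : ℕ) :
    ∃ M : ℕ, ∀ σ τ : XC, resN M σ = resN M τ → resN L (f σ) = resN L (f τ) := by
  classical
  set Ff : XC → (Fin L → Bool) := fun σ => resN L (f σ) with hFf
  have hFfc : Continuous Ff := by
    apply continuous_pi
    intro i
    exact (continuous_apply i.val).comp hf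
  -- for each σ there is a level M σ determining Ff
  have key : ∀ σ : XC, ∃ M : ℕ, ∀ τ, resN M τ = resN M σ → Ff τ = Ff σ := by
    intro σ
    have hopen : IsOpen (Ff ⁻¹' {Ff σ}) := (isOpen_discrete _).preimage hFfc
    rw [isOpen_pi_iff] at hopen
    obtain ⟨I, u, hIu, hsub⟩ := hopen σ rfl
    refine ⟨(I.sup id) + 1, fun τ hτ => ?_⟩
    have : τ ∈ (↑I : Set ℕ).pi u := by
      intro a ha
      have haI : a ∈ I := ha
      have : a < I.sup id + 1 := Nat.lt_succ_of_le (Finset.le_sup (f := id) haI)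
      have heq : τ a = σ a := congrFun hτ ⟨a, this⟩
      rw [heq]; exact (hIu a haI).2
    exact hsub this
  choose Mf hMf using key
  -- compact cover
  have hcover : (Set.univ : Set XC) ⊆ ⋃ σ : XC, {τ | resN (Mf σ) τ = resN (Mf σ) σ} := by
    intro τ _
    exact Set.mem_iUnion.2 ⟨τ, rfl⟩
  obtain ⟨t, ht⟩ := isCompact_univ.elim_finite_subcover
    (fun σ : XC => {τ | resN (Mf σ) τ = resN (Mf σ) σ})
    (fun σ => by
      have := clopen_of_det (fun τ => resN (Mf σ) τ) (Mf σ) (fun a b h => h) (resN (Mf σ) σ)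
      exact this.isOpen) hcover
  refine ⟨t.sup Mf, fun σ τ h => ?_⟩
  have hσ := ht (Set.mem_univ σ)
  simp only [Set.mem_iUnion] at hσ
  obtain ⟨σ₀, hσ₀t, hσ₀⟩ := hσ
  have hM : Mf σ₀ ≤ t.sup Mf := Finset.le_sup hσ₀t
  have hτ : resN (Mf σ₀) τ = resN (Mf σ₀) σ₀ := by
    have h1 : resN (Mf σ₀) τ = resN (Mf σ₀) σ := by
      rw [resN_eq_iff] at h ⊢
      intro i hi
      exact (h i (lt_of_lt_of_le hi hM)).symm
    rw [h1]; exact hσ₀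
  have e1 : Ff σ = Ff σ₀ := hMf σ₀ σ hσ₀
  have e2 : Ff τ = Ff σ₀ := hMf σ₀ τ hτ
  show Ff σ = Ff τ
  rw [e1, e2]

end Basics
section Dist
open Classical

lemma cantorDist_le (Lv : ℕ) (σ τ : ℕ → Bool) (h : ∀ i < Lv, σ i = τ i) :
    cantorDist σ τ ≤ 1 / (Lv + 1) := by
  unfold cantorDist
  split
  · next hex =>
    have hfind : Lv ≤ Nat.find hex := by
      by_contra hlt
      push_neg at hlt
      exact (Nat.find_spec hex) (h _ hlt)
    apply one_div_le_one_div_of_le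
    · positivity
    · have : (Lv : ℝ) ≤ (Nat.find hex : ℝ) := by exact_mod_cast hfind
      linarith
  · positivity

lemma one_div_succ_lt {ε : ℝ} (hε : 0 < ε) {Lv : ℕ} (hL : ⌈1/ε⌉₊ ≤ Lv) :
    1 / ((Lv : ℝ) + 1) < ε := by
  have h1 : 1/ε ≤ (Lv : ℝ) := le_trans (Nat.le_ceil _) (by exact_mod_cast hL)
  have h2 : (0:ℝ) < (Lv : ℝ) + 1 := by positivity
  rw [div_lt_iff₀ h2]
  have : 1/ε < (Lv:ℝ) + 1 := by linarith
  calc (1:ℝ) = ε * (1/ε) := by field_simp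
  _ < ε * ((Lv:ℝ)+1) := by
      apply mul_lt_mul_of_pos_left this hε

lemma cantorDiam_le (Lv : ℕ) (A : Set (ℕ → Bool))
    (h : ∀ σ ∈ A, ∀ τ ∈ A, ∀ i < Lv, σ i = τ i) :
    cantorDiam A ≤ 1 / (Lv + 1) := by
  apply Real.sSup_le
  · rintro x ⟨σ, hσ, τ, hτ, rfl⟩
    exact cantorDist_le Lv σ τ (h σ hσ τ hτ)
  · positivity

end Dist

section Lead

/-- length of the initial run of `true`s of `fb`, capped at `cap` -/
noncomputable def lead (fb : ℕ → Bool) (cap : ℕ) : ℕ :=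
  Nat.find (⟨cap, Or.inl le_rfl⟩ : ∃ p, cap ≤ p ∨ fb p = false)

lemma lead_le (fb : ℕ → Bool) (cap : ℕ) : lead fb cap ≤ cap :=
  Nat.find_le (Or.inl le_rfl)

lemma lead_true (fb : ℕ → Bool) (cap : ℕ) {p : ℕ} (hp : p < lead fb cap) : fb p = true := by
  have := Nat.find_min (⟨cap, Or.inl le_rfl⟩ : ∃ p, cap ≤ p ∨ fb p = false) hp
  push_neg at this
  simpa using this.2

lemma lead_false (fb : ℕ → Bool) (cap : ℕ) (h : lead fb cap < cap) : fb (lead fb cap) = false := by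
  have := Nat.find_spec (⟨cap, Or.inl le_rfl⟩ : ∃ p, cap ≤ p ∨ fb p = false)
  rcases this with h1 | h2
  · exact absurd h (not_lt.2 h1)
  · exact h2

lemma lead_eq_of (fb : ℕ → Bool) (cap c : ℕ) (hle : c ≤ cap)
    (htrue : ∀ p < c, fb p = true) (hfalse : c < cap → fb c = false) : lead fb cap = c := by
  rcases lt_trichotomy (lead fb cap) c with h | h | h
  · have := lead_false fb cap (lt_of_lt_of_le h hle)
    rw [htrue _ h] at this; cases this
  · exact h
  · have hc : c < cap := lt_of_lt_of_le (lt_of_lt_of_le h (lead_le fb cap)) le_rfl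
    have := lead_true fb cap h
    rw [hfalse hc] at this; cases this

lemma lead_congr (fb fb' : ℕ → Bool) (cap : ℕ) (h : ∀ p < cap, fb p = fb' p) :
    lead fb cap = lead fb' cap := by
  apply lead_eq_of
  · exact lead_le fb' cap
  · intro p hp
    rw [h p (lt_of_lt_of_le hp (lead_le fb' cap))]
    exact lead_true fb' cap hp
  · intro hc
    rw [h _ hc]
    exact lead_false fb' cap hc

end Lead
section Gadget

variable {L2 L3 : ℕ} (tsf : (Fin L3 → Bool) → (Fin L2 → Bool))

noncomputable def srcFT (x : Fin L2 → Bool) : Fintype {v : Fin L3 → Bool // tsf v = x} :=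
  Fintype.ofFinite _

noncomputable def nu (x : Fin L2 → Bool) : ℕ := @Fintype.card _ (srcFT tsf x)

noncomputable def seqv (x : Fin L2 → Bool) : {v : Fin L3 → Bool // tsf v = x} ≃ Fin (nu tsf x) :=
  @Fintype.equivFin _ (srcFT tsf x)

lemma nu_pos (hsurj : Function.Surjective tsf) (x : Fin L2 → Bool) : 0 < nu tsf x := by
  obtain ⟨v, hv⟩ := hsurj x
  exact @Fintype.card_pos _ (srcFT tsf x) ⟨⟨v, hv⟩⟩

lemma nu_le (x : Fin L2 → Bool) : nu tsf x ≤ 2 ^ L3 := by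
  have h := @Fintype.card_le_of_injective _ _ (srcFT tsf x) _
    (Subtype.val : {v : Fin L3 → Bool // tsf v = x} → (Fin L3 → Bool)) Subtype.val_injective
  exact h.trans_eq (by simp [Fintype.card_fun])

def ulen (i ν : ℕ) : ℕ := if i = ν - 1 then ν - 1 else i + 1

lemma ulen_le (i ν : ℕ) (h : i < ν) : ulen i ν ≤ ν := by
  unfold ulen; split <;> omega

/-- index of an atom within its fiber -/
noncomputable def idxv (v : Fin L3 → Bool) : ℕ := ((seqv tsf (tsf v)) ⟨v, rfl⟩).val

lemma idxv_lt (v : Fin L3 → Bool) : idxv tsf v < nu tsf (tsf v) :=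
  ((seqv tsf (tsf v)) ⟨v, rfl⟩).isLt

lemma seqv_symm_congr {x x' : Fin L2 → Bool} (h : x = x') (c : ℕ) (hc : c < nu tsf x)
    (hc' : c < nu tsf x') :
    ((seqv tsf x).symm ⟨c, hc⟩).val = ((seqv tsf x').symm ⟨c, hc'⟩).val := by subst h; rfl

lemma seqv_val_congr {x x' : Fin L2 → Bool} (h : x = x') (v : Fin L3 → Bool)
    (hv : tsf v = x) (hv' : tsf v = x') :
    ((seqv tsf x) ⟨v, hv⟩).val = ((seqv tsf x') ⟨v, hv'⟩).val := by subst h; rfl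

noncomputable def gfun (σ : ℕ → Bool) : ℕ → Bool := fun p =>
  if hp : p < L2 then tsf (resN L3 σ) ⟨p, hp⟩
  else if p - L2 < ulen (idxv tsf (resN L3 σ)) (nu tsf (tsf (resN L3 σ))) then
    decide (p - L2 < idxv tsf (resN L3 σ))
  else σ (L3 + (p - L2 - ulen (idxv tsf (resN L3 σ)) (nu tsf (tsf (resN L3 σ)))))

noncomputable def cof (τ : ℕ → Bool) : ℕ :=
  lead (fun p => τ (L2 + p)) (nu tsf (resN L2 τ) - 1)

lemma cof_lt (hsurj : Function.Surjective tsf) (τ : ℕ → Bool) :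
    cof tsf τ < nu tsf (resN L2 τ) :=
  lt_of_le_of_lt (lead_le _ _) (Nat.sub_lt (nu_pos tsf hsurj _) one_pos)

noncomputable def vof (hsurj : Function.Surjective tsf) (τ : ℕ → Bool) : Fin L3 → Bool :=
  ((seqv tsf (resN L2 τ)).symm ⟨cof tsf τ, cof_lt tsf hsurj τ⟩).val

noncomputable def gifun (hsurj : Function.Surjective tsf) (τ : ℕ → Bool) : ℕ → Bool := fun q =>
  if hq : q < L3 then vof tsf hsurj τ ⟨q, hq⟩
  else τ (L2 + ulen (cof tsf τ) (nu tsf (resN L2 τ)) + (q - L3))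

lemma gfun_res (σ : ℕ → Bool) : resN L2 (gfun tsf σ) = tsf (resN L3 σ) := by
  funext i
  simp only [resN, gfun]
  rw [dif_pos i.isLt]

lemma tsf_vof (hsurj : Function.Surjective tsf) (τ : ℕ → Bool) :
    tsf (vof tsf hsurj τ) = resN L2 τ :=
  ((seqv tsf (resN L2 τ)).symm ⟨cof tsf τ, cof_lt tsf hsurj τ⟩).property

lemma idxv_vof (hsurj : Function.Surjective tsf) (τ : ℕ → Bool) :
    idxv tsf (vof tsf hsurj τ) = cof tsf τ := by
  set x := resN L2 τ with hx
  set vs := (seqv tsf x).symm ⟨cof tsf τ, cof_lt tsf hsurj τ⟩ with hvs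
  show ((seqv tsf (tsf vs.val)) ⟨vs.val, rfl⟩).val = cof tsf τ
  rw [seqv_val_congr tsf vs.property vs.val rfl vs.property]
  have : (⟨vs.val, vs.property⟩ : {v : Fin L3 → Bool // tsf v = x}) = vs := rfl
  rw [this, hvs, Equiv.apply_symm_apply]

lemma gfun_left_inv (hsurj : Function.Surjective tsf) (σ : ℕ → Bool) :
    gifun tsf hsurj (gfun tsf σ) = σ := by
  set v := resN L3 σ with hv
  set x := tsf v with hx
  set ν := nu tsf x with hν
  set i := idxv tsf v with hi
  have hiν : i < ν := idxv_lt tsf v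
  set u := ulen i ν with hu
  set τ := gfun tsf σ with hτ
  have hres2 : resN L2 τ = x := gfun_res tsf σ
  have hbit : ∀ p : ℕ, τ (L2 + p) =
      (if p < u then decide (p < i) else σ (L3 + (p - u))) := by
    intro p
    show gfun tsf σ (L2 + p) = _
    rw [gfun]
    rw [dif_neg (by omega)]
    have h2 : L2 + p - L2 = p := by omega
    rw [h2]
  have hcof : cof tsf τ = i := by
    rw [cof, hres2, ← hν]
    apply lead_eq_of
    · omega
    · intro p hp
      rw [hbit p, if_pos (by rw [hu]; unfold ulen; split <;> omega)]
      simpa using hp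
    · intro hcl
      rw [hbit i, if_pos (by rw [hu]; unfold ulen; split <;> omega)]
      simp
  have hvof : vof tsf hsurj τ = v := by
    rw [vof]
    have hfin : (⟨cof tsf τ, cof_lt tsf hsurj τ⟩ : Fin (nu tsf (resN L2 τ))) =
        (seqv tsf (resN L2 τ)) ⟨v, by rw [hres2]⟩ := by
      apply Fin.ext
      simp only [hcof]
      rw [hi]
      show i = ((seqv tsf (resN L2 τ)) ⟨v, _⟩).val
      rw [seqv_val_congr tsf hres2 v (by rw [hres2]) hx.symm]
      rfl
    rw [hfin, Equiv.symm_apply_apply]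
  funext q
  show gifun tsf hsurj τ q = σ q
  rw [gifun]
  by_cases hq : q < L3
  · rw [dif_pos hq, hvof]
    rfl
  · rw [dif_neg hq, hres2, ← hν, hcof, ← hu]
    have hassoc : L2 + u + (q - L3) = L2 + (u + (q - L3)) := by omega
    rw [hassoc, hbit (u + (q - L3)), if_neg (by omega)]
    congr 1
    omega

lemma gfun_right_inv (hsurj : Function.Surjective tsf) (τ : ℕ → Bool) :
    gfun tsf (gifun tsf hsurj τ) = τ := by
  set x := resN L2 τ with hx
  set ν := nu tsf x with hν
  set c := cof tsf τ with hc
  have hcν : c < ν := cof_lt tsf hsurj τ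
  set co := ulen c ν with hco
  set σ := gifun tsf hsurj τ with hσ
  have hres3 : resN L3 σ = vof tsf hsurj τ := by
    funext q
    show gifun tsf hsurj τ q.val = _
    rw [gifun, dif_pos q.isLt]
  have htsf : tsf (resN L3 σ) = x := by rw [hres3]; exact tsf_vof tsf hsurj τ
  have hidx : idxv tsf (resN L3 σ) = c := by rw [hres3]; exact idxv_vof tsf hsurj τ
  have hlform : lead (fun q => τ (L2 + q)) (ν - 1) = c := rfl
  funext p
  show gfun tsf σ p = τ p
  rw [gfun]
  by_cases hp : p < L2
  · rw [dif_pos hp, htsf]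
    rfl
  · rw [dif_neg hp, htsf, hidx, ← hν, ← hco]
    by_cases hin : p - L2 < co
    · rw [if_pos hin]
      have hpe : p = L2 + (p - L2) := by omega
      by_cases hpc : p - L2 < c
      · have := lead_true (fun q => τ (L2 + q)) (ν - 1) (p := p - L2) (by rw [hlform]; exact hpc)
        rw [hpe]
        simp only [this]
        simp [hpc]
      · -- p - L2 ≥ c and p - L2 < co: forces c < ν - 1 and p - L2 = c
        have hcolt : co = c + 1 ∧ c < ν - 1 := by
          have hco2 : co = ulen c ν := hco
          unfold ulen at hco2
          by_cases hcc : c = ν - 1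
          · exfalso; rw [if_pos hcc] at hco2; omega
          · rw [if_neg hcc] at hco2; omega
        have hpc2 : p - L2 = c := by omega
        have hff := lead_false (fun q => τ (L2 + q)) (ν - 1) (by rw [hlform]; exact hcolt.2)
        rw [hlform] at hff
        rw [hpe, hpc2]
        simp only [hff]
        simp
    · rw [if_neg hin]
      show gifun tsf hsurj τ (L3 + (p - L2 - co)) = τ p
      rw [gifun, dif_neg (by omega), ← hx, ← hν, ← hc, ← hco]
      congr 1
      omega

noncomputable def ghomeo (hsurj : Function.Surjective tsf) : (ℕ → Bool) ≃ₜ (ℕ → Bool) := by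
  refine Homeomorph.mk ⟨gfun tsf, gifun tsf hsurj, gfun_left_inv tsf hsurj, gfun_right_inv tsf hsurj⟩ ?_ ?_
  · -- continuity of gfun
    apply continuous_pi
    intro p
    apply continuous_of_det _ (L3 + p + 1)
    intro σ τ h
    have h3 : resN L3 σ = resN L3 τ := by
      rw [resN_eq_iff] at h ⊢
      intro i hi
      exact h i (by omega)
    show gfun tsf σ p = gfun tsf τ p
    rw [gfun, gfun, h3]
    split
    · rfl
    · split
      · rfl
      · rw [resN_eq_iff] at h
        apply h
        omega
  · -- continuity of gifun
    apply continuous_pi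
    intro q
    apply continuous_of_det _ (L2 + 2 ^ L3 + q + 1)
    intro σ τ h
    have h2p : 0 < 2 ^ L3 := Nat.two_pow_pos L3
    have h2 : resN L2 σ = resN L2 τ := by
      rw [resN_eq_iff] at h ⊢
      intro i hi
      exact h i (by omega)
    have hνle : nu tsf (resN L2 σ) ≤ 2 ^ L3 := nu_le tsf _
    have hcof : cof tsf σ = cof tsf τ := by
      rw [cof, cof, h2]
      apply lead_congr
      intro pp hpp
      rw [resN_eq_iff] at h
      apply h
      have : nu tsf (resN L2 τ) ≤ 2 ^ L3 := nu_le tsf _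
      omega
    have hcl : cof tsf τ < nu tsf (resN L2 σ) := by
      rw [h2]; exact cof_lt tsf hsurj τ
    have hvof : vof tsf hsurj σ = vof tsf hsurj τ := by
      rw [vof, vof]
      rw [show (⟨cof tsf σ, cof_lt tsf hsurj σ⟩ : Fin (nu tsf (resN L2 σ))) =
        ⟨cof tsf τ, hcl⟩ from Fin.ext hcof]
      exact seqv_symm_congr tsf h2 _ hcl _
    show gifun tsf hsurj σ q = gifun tsf hsurj τ q
    rw [gifun, gifun, hvof, h2, hcof]
    split
    · rfl
    · rw [resN_eq_iff] at h
      apply h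
      have hu : ulen (cof tsf τ) (nu tsf (resN L2 τ)) ≤ nu tsf (resN L2 τ) :=
        ulen_le _ _ (by rw [← h2, ← hcof]; exact cof_lt tsf hsurj σ)
      have : nu tsf (resN L2 τ) ≤ 2 ^ L3 := nu_le tsf _
      omega

lemma ghomeo_res (hsurj : Function.Surjective tsf) (σ : ℕ → Bool) :
    resN L2 (ghomeo tsf hsurj σ) = tsf (resN L3 σ) := gfun_res tsf σ

end Gadget
section Iter
open Function

lemma iter_factorial_period {α : Type*} [Fintype α] (e : α → α) (x : α) (Q : ℕ)
    (hQ : Fintype.card α ≤ Q) :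
    ∀ j, Q ≤ j → ∀ c, e^[j + c * Nat.factorial Q] x = e^[j] x := by
  obtain ⟨y1, y2, hne, heq⟩ := Fintype.exists_ne_map_eq_of_card_lt
    (fun i : Fin (Q + 1) => e^[i.val] x) (by simp; omega)
  -- wlog a < b
  obtain ⟨a, b, hab, hbQ, he⟩ : ∃ a b : ℕ, a < b ∧ b ≤ Q ∧ e^[a] x = e^[b] x := by
    rcases lt_trichotomy y1.val y2.val with h | h | h
    · exact ⟨y1.val, y2.val, h, by omega, heq⟩
    · exact absurd (Fin.ext h) hne
    · exact ⟨y2.val, y1.val, h, by omega, heq.symm⟩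
  set ℓ := b - a with hℓ
  have hℓpos : 0 < ℓ := by omega
  have hstep : ∀ j, a ≤ j → e^[j + ℓ] x = e^[j] x := by
    intro j hj
    have h1 : j + ℓ = (j - a) + b := by omega
    have h2 : j = (j - a) + a := by omega
    rw [h1, iterate_add_apply, ← he, ← iterate_add_apply, ← h2]
  have hmul : ∀ t j, a ≤ j → e^[j + t * ℓ] x = e^[j] x := by
    intro t
    induction t with
    | zero => simp
    | succ t ih =>
      intro j hj
      have : j + (t + 1) * ℓ = (j + t * ℓ) + ℓ := by ring
      rw [this, hstep (j + t * ℓ) (by omega), ih j hj]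
  intro j hj c
  have hdvd : ℓ ∣ Nat.factorial Q := Nat.dvd_factorial hℓpos (by omega)
  obtain ⟨r, hr⟩ := hdvd
  have : j + c * Nat.factorial Q = j + (c * r) * ℓ := by rw [hr]; ring
  rw [this, hmul (c * r) j (by omega)]

end Iter

section Dumbbell

lemma dumbOut (n s m : ℕ) (hn : 0 < n) (hs : 0 < s) (hm : 0 < m) (j : Fin (n + s + m)) :
    ∃ j' : Fin (n + s + m), dumbbellEdge n s m j j' := by
  by_cases h1 : j.val = n - 1
  · exact ⟨⟨0, by omega⟩, Or.inr (Or.inl ⟨h1, rfl⟩)⟩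
  by_cases h2 : j.val = n + s + m - 1
  · exact ⟨⟨n + s, by omega⟩, Or.inr (Or.inr (Or.inr ⟨h2, rfl⟩))⟩
  · have hj := j.isLt
    exact ⟨⟨j.val + 1, by omega⟩, Or.inl ⟨rfl, by omega⟩⟩

lemma dumbIn (n s m : ℕ) (hn : 0 < n) (hs : 0 < s) (hm : 0 < m) (j' : Fin (n + s + m)) :
    ∃ j : Fin (n + s + m), dumbbellEdge n s m j j' := by
  by_cases h1 : j'.val = 0
  · exact ⟨⟨n - 1, by omega⟩, Or.inr (Or.inl ⟨rfl, h1⟩)⟩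
  by_cases h2 : j'.val = n
  · exact ⟨⟨0, by omega⟩, Or.inr (Or.inr (Or.inl ⟨rfl, h2⟩))⟩
  by_cases h3 : j'.val = n + s
  · exact ⟨⟨n + s + m - 1, by omega⟩, Or.inr (Or.inr (Or.inr ⟨rfl, h3⟩))⟩
  · have hj := j'.isLt
    refine ⟨⟨j'.val - 1, by omega⟩, Or.inl ⟨?_, ?_⟩⟩
    · show j'.val = (j'.val - 1) + 1
      omega
    · show (j'.val - 1) + 1 ≠ n
      omega

end Dumbbell
section FSide
open Function

variable (f : (ℕ → Bool) ≃ₜ (ℕ → Bool)) (L L0 Q k n s m : ℕ)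

def phi0 : (Fin L0 → Bool) → (Fin L → Bool) := fun w => resN L (f (extN w))

def FedgeR (u u' : Fin L → Bool) : Prop :=
  ∃ w : Fin L0 → Bool, prW L L0 w = u ∧ phi0 f L L0 w = u'

noncomputable def iotaF : (Fin L → Bool) → (Fin L0 → Bool) := fun u =>
  if h : ∃ w, phi0 f L L0 w = u then h.choose else (fun _ => false)

noncomputable def hbF : (Fin L → Bool) → (Fin L → Bool) := fun u =>
  prW L L0 (iotaF f L L0 u)

noncomputable def nxF : (Fin L → Bool) → (Fin L → Bool) := fun u =>
  phi0 f L L0 (prW L0 L u)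

lemma prW_pad {A B : ℕ} (h : A ≤ B) (x : Fin A → Bool) : prW A B (prW B A x) = x := by
  funext i
  have h1 : i.val < B := lt_of_lt_of_le i.isLt h
  simp [prW, h1, i.isLt]

variable {f L L0}

lemma phi0_res (hU : ∀ σ τ, resN L0 σ = resN L0 τ → resN L (f σ) = resN L (f τ)) (σ : ℕ → Bool) :
    phi0 f L L0 (resN L0 σ) = resN L (f σ) :=
  hU (extN (resN L0 σ)) σ (by rw [resN_extN])

lemma phi0_surj (hU : ∀ σ τ, resN L0 σ = resN L0 τ → resN L (f σ) = resN L (f τ))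
    (u : Fin L → Bool) : ∃ w, phi0 f L L0 w = u := by
  refine ⟨resN L0 (f.symm (extN u)), ?_⟩
  rw [phi0_res hU, Homeomorph.apply_symm_apply, resN_extN]

lemma iotaF_spec (hU : ∀ σ τ, resN L0 σ = resN L0 τ → resN L (f σ) = resN L (f τ))
    (u : Fin L → Bool) : phi0 f L L0 (iotaF f L L0 u) = u := by
  rw [iotaF, dif_pos (phi0_surj hU u)]
  exact (phi0_surj hU u).choose_spec

lemma Fedge_hb (hU : ∀ σ τ, resN L0 σ = resN L0 τ → resN L (f σ) = resN L (f τ))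
    (u : Fin L → Bool) : FedgeR f L L0 (hbF f L L0 u) u :=
  ⟨iotaF f L L0 u, rfl, iotaF_spec hU u⟩

lemma Fedge_nx (hLL0 : L ≤ L0) (u : Fin L → Bool) : FedgeR f L L0 u (nxF f L L0 u) :=
  ⟨prW L0 L u, prW_pad hLL0 u, rfl⟩

variable (f L L0)

noncomputable def wEnum : (Fin L0 → Bool) ≃ Fin (2 ^ L0) :=
  Fintype.equivFinOfCardEq (by simp [Fintype.card_fun])

noncomputable def wsel : Fin k → (Fin L0 → Bool) := fun i =>
  (wEnum L0).symm ⟨i.val % 2 ^ L0, Nat.mod_lt _ (Nat.two_pow_pos L0)⟩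

lemma wsel_surj (hk : 2 ^ L0 ≤ k) (w : Fin L0 → Bool) : ∃ i, wsel L0 k i = w := by
  refine ⟨⟨((wEnum L0) w).val, lt_of_lt_of_le ((wEnum L0) w).isLt hk⟩, ?_⟩
  rw [wsel, Equiv.symm_apply_eq]
  apply Fin.ext
  simp [Nat.mod_eq_of_lt ((wEnum L0) w).isLt]

noncomputable def betaF (d : Fin k × Fin (n + s + m)) : Fin L → Bool :=
  let w := wsel L0 k d.1
  let j := d.2.val
  if j < n then (hbF f L L0)^[Q + n - j] (prW L L0 w)
  else if j < n + Q then (hbF f L L0)^[Q - 1 - (j - n)] (prW L L0 w)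
  else (nxF f L L0)^[j - n - Q] (phi0 f L L0 w)

variable {f L L0 Q k n s m}

lemma iter_congr {α : Type*} (e : α → α) (x : α) {a b : ℕ} (h : a = b) : e^[a] x = e^[b] x := by
  rw [h]

/-- β is a graph homomorphism from the dumbbells to the transition relation of f -/
lemma betaF_hom
    (hU : ∀ σ τ, resN L0 σ = resN L0 τ → resN L (f σ) = resN L (f τ))
    (hLL0 : L ≤ L0) (hQ : Q = 2 ^ L) (hn : 0 < n) (hm : 0 < m)
    (hNn : Nat.factorial Q ∣ n) (hMm : Nat.factorial Q ∣ m) (hs : 2 * Q + 2 ≤ s)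
    (d d' : Fin k × Fin (n + s + m)) (hsame : d.1 = d'.1)
    (hedge : dumbbellEdge n s m d.2 d'.2) :
    FedgeR f L L0 (betaF f L L0 Q k n s m d) (betaF f L L0 Q k n s m d') := by
  have hQpos : 0 < Q := by rw [hQ]; exact Nat.two_pow_pos L
  set w := wsel L0 k d.1 with hw
  have hw' : wsel L0 k d'.1 = w := by rw [← hsame]
  set u := prW L L0 w with hu
  set u' := phi0 f L L0 w with hu'
  set B := hbF f L L0 with hB
  set Nx := nxF f L L0 with hNx
  have hIT : ∀ (e : (Fin L → Bool) → (Fin L → Bool)) x j c, Q ≤ j →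
      e^[j + c * Nat.factorial Q] x = e^[j] x := by
    intro e x j c hj
    exact iter_factorial_period e x Q (by simp [Fintype.card_fun, hQ]) j hj c
  obtain ⟨cn, hcn⟩ := hNn
  obtain ⟨cm, hcm⟩ := hMm
  have hedgeB : ∀ (a : ℕ), FedgeR f L L0 (B^[a + 1] u) (B^[a] u) := by
    intro a
    rw [iterate_succ_apply']
    exact Fedge_hb hU _
  have hedgeN : ∀ (a : ℕ), FedgeR f L L0 (Nx^[a] u') (Nx^[a + 1] u') := by
    intro a
    rw [iterate_succ_apply']
    exact Fedge_nx hLL0 _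
  have hval : ∀ (j : Fin (n + s + m)) (i : Fin k), i = d.1 →
      betaF f L L0 Q k n s m (i, j) =
      (if j.val < n then B^[Q + n - j.val] u
       else if j.val < n + Q then B^[Q - 1 - (j.val - n)] u
       else Nx^[j.val - n - Q] u') := by
    intro j i hi
    rw [betaF]
    simp only [hi, ← hw, ← hu, ← hu', ← hB, ← hNx]
  have hd : d = (d.1, d.2) := rfl
  have hd' : d' = (d.1, d'.2) := by rw [hsame]
  rw [hd, hd', hval d.2 d.1 rfl, hval d'.2 d.1 rfl]
  have haT : d.2.val < n + s + m := d.2.isLt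
  have hbT : d'.2.val < n + s + m := d'.2.isLt
  -- closure identities
  have hclose1 : B^[Q + n] u = B^[Q] u := by
    have : Q + n = Q + cn * Nat.factorial Q := by rw [hcn]; ring
    rw [this, hIT B u Q cn le_rfl]
  have hclose2 : Nx^[(s - Q) + m] u' = Nx^[s - Q] u' := by
    have : (s - Q) + m = (s - Q) + cm * Nat.factorial Q := by rw [hcm]; ring
    rw [this, hIT Nx u' (s - Q) cm (by omega)]
  rcases hedge with ⟨hb1, hbn⟩ | ⟨han, hb0⟩ | ⟨ha0, hbn2⟩ | ⟨hal, hbl⟩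
  · -- successor edge
    rw [hb1]
    by_cases hcase1 : d.2.val + 1 < n
    · rw [if_pos (show d.2.val < n by omega), if_pos (show d.2.val + 1 < n from hcase1)]
      rw [iter_congr B u (show Q + n - d.2.val = (Q + n - (d.2.val + 1)) + 1 by omega)]
      exact hedgeB _
    · by_cases hcase2 : d.2.val < n
      · omega
      · -- d.2.val ≥ n
        rw [if_neg (show ¬ (d.2.val < n) from hcase2),
            if_neg (show ¬ (d.2.val + 1 < n) by omega)]
        by_cases hcase3 : d.2.val + 1 - n < Q
        · rw [if_pos (show d.2.val < n + Q by omega), if_pos (show d.2.val + 1 < n + Q by omega)]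
          rw [iter_congr B u
            (show Q - 1 - (d.2.val - n) = (Q - 1 - (d.2.val + 1 - n)) + 1 by omega)]
          exact hedgeB _
        · by_cases hcase4 : d.2.val - n < Q
          · -- crossing edge using w itself
            rw [if_pos (show d.2.val < n + Q by omega),
                if_neg (show ¬ (d.2.val + 1 < n + Q) by omega)]
            rw [iter_congr B u (show Q - 1 - (d.2.val - n) = 0 by omega),
                iter_congr Nx u' (show d.2.val + 1 - n - Q = 0 by omega)]
            exact ⟨w, rfl, rfl⟩
          · rw [if_neg (show ¬ (d.2.val < n + Q) by omega),
                if_neg (show ¬ (d.2.val + 1 < n + Q) by omega)]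
            rw [iter_congr Nx u'
              (show d.2.val + 1 - n - Q = (d.2.val - n - Q) + 1 by omega)]
            exact hedgeN _
  · -- cycle-1 closing edge
    rw [han, hb0, if_pos (show n - 1 < n by omega), if_pos (show 0 < n from hn)]
    rw [iter_congr B u (show Q + n - (n - 1) = Q + 1 by omega),
        iter_congr B u (show Q + n - 0 = Q + n by omega), hclose1]
    exact hedgeB _
  · -- bar entry edge
    rw [ha0, hbn2, if_pos (show 0 < n from hn), if_neg (show ¬ (n < n) by omega),
        if_pos (show n < n + Q by omega)]
    rw [iter_congr B u (show Q + n - 0 = Q + n by omega), hclose1,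
        iter_congr B u (show Q - 1 - (n - n) = Q - 1 by omega)]
    rw [iter_congr B u (show Q = (Q - 1) + 1 by omega)]
    exact hedgeB _
  · -- cycle-2 closing edge
    rw [hal, hbl, if_neg (show ¬ (n + s + m - 1 < n) by omega),
        if_neg (show ¬ (n + s + m - 1 < n + Q) by omega),
        if_neg (show ¬ (n + s < n) by omega), if_neg (show ¬ (n + s < n + Q) by omega)]
    rw [iter_congr Nx u' (show n + s - n - Q = s - Q by omega), ← hclose2,
        iter_congr Nx u' (show (s - Q) + m = (n + s + m - 1 - n - Q) + 1 by omega)]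
    exact hedgeN _

/-- every transition of f is covered by a bar edge of some dumbbell -/
lemma betaF_cover (hk : 2 ^ L0 ≤ k) (hQpos : 0 < Q) (hn : 0 < n) (hs : 2 * Q + 2 ≤ s)
    (hm : 0 < m) (w : Fin L0 → Bool) :
    ∃ d d' : Fin k × Fin (n + s + m), d.1 = d'.1 ∧ dumbbellEdge n s m d.2 d'.2 ∧
      betaF f L L0 Q k n s m d = prW L L0 w ∧ betaF f L L0 Q k n s m d' = phi0 f L L0 w := by
  obtain ⟨i, hi⟩ := wsel_surj L0 k hk w
  refine ⟨(i, ⟨n + Q - 1, by omega⟩), (i, ⟨n + Q, by omega⟩), rfl, ?_, ?_, ?_⟩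
  · exact Or.inl ⟨by show n + Q = (n + Q - 1) + 1; omega, by show (n + Q - 1) + 1 ≠ n; omega⟩
  · rw [betaF]
    simp only [hi]
    rw [if_neg (by show ¬ (n + Q - 1 < n); omega), if_pos (by show n + Q - 1 < n + Q; omega)]
    rw [iter_congr (hbF f L L0) _ (show Q - 1 - (n + Q - 1 - n) = 0 by omega)]
    simp
  · rw [betaF]
    simp only [hi]
    rw [if_neg (by show ¬ (n + Q < n); omega), if_neg (by show ¬ (n + Q < n + Q); omega)]
    rw [iter_congr (nxF f L L0) _ (show n + Q - n - Q = 0 by omega)]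
    simp

lemma betaF_surj (hk : 2 ^ L0 ≤ k) (hQpos : 0 < Q) (hn : 0 < n) (hs : 2 * Q + 2 ≤ s)
    (hm : 0 < m) (hLL0 : L ≤ L0) (u : Fin L → Bool) :
    ∃ d, betaF f L L0 Q k n s m d = u := by
  obtain ⟨d, d', _, _, hd, _⟩ := betaF_cover (f := f) hk hQpos hn hs hm (prW L0 L u)
  exact ⟨d, by rw [hd, prW_pad hLL0]⟩

end FSide
section Coloring

variable {L L0 R L2 k n s m : ℕ}
variable (f : (ℕ → Bool) ≃ₜ (ℕ → Bool))

/-- encode a dumbbell vertex into R bits -/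
noncomputable def encD (k T R : ℕ) (d : Fin k × Fin T) : Fin R → Bool :=
  fun i => Nat.testBit (finProdFinEquiv d).val i.val

lemma encD_inj {k T R : ℕ} (hT : 0 < T) (hRT : k * T ≤ 2 ^ R) {d d' : Fin k × Fin T}
    (h : encD k T R d = encD k T R d') : d = d' := by
  apply finProdFinEquiv.injective
  apply Fin.ext
  apply Nat.eq_of_testBit_eq
  intro i
  by_cases hi : i < R
  · exact congrFun h ⟨i, hi⟩
  · have hb : ∀ x : Fin (k * T), x.val < 2 ^ i := by
      intro x
      calc x.val < k * T := x.isLt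
      _ ≤ 2 ^ R := hRT
      _ ≤ 2 ^ i := Nat.pow_le_pow_right (by norm_num) (by omega)
    rw [Nat.testBit_lt_two_pow (hb _), Nat.testBit_lt_two_pow (hb _)]

section WithBeta

variable (βv : Fin k × Fin (n + s + m) → Fin L → Bool)

/-- dumbbell edge predicate on colors -/
def EDp (d d' : Fin k × Fin (n + s + m)) : Prop :=
  d.1 = d'.1 ∧ dumbbellEdge n s m d.2 d'.2

lemma EDp_out (hn : 0 < n) (hs : 0 < s) (hm : 0 < m) (d : Fin k × Fin (n + s + m)) :
    ∃ d', EDp (n := n) (s := s) (m := m) (k := k) d d' := by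
  obtain ⟨j', hj'⟩ := dumbOut n s m hn hs hm d.2
  exact ⟨(d.1, j'), rfl, hj'⟩

lemma EDp_in (hn : 0 < n) (hs : 0 < s) (hm : 0 < m) (d' : Fin k × Fin (n + s + m)) :
    ∃ d, EDp (n := n) (s := s) (m := m) (k := k) d d' := by
  obtain ⟨j, hj⟩ := dumbIn n s m hn hs hm d'.2
  exact ⟨(d'.1, j), rfl, hj⟩

open Classical in
/-- decode R bits into a color over a given u -/
noncomputable def decD (hD : ∀ u, ∃ d, βv d = u) (u : Fin L → Bool) (y : Fin R → Bool) :
    Fin k × Fin (n + s + m) :=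
  if h : ∃ d, encD k (n + s + m) R d = y ∧ βv d = u then h.choose else (hD u).choose

lemma decD_beta (hD : ∀ u, ∃ d, βv d = u) (u : Fin L → Bool) (y : Fin R → Bool) :
    βv (decD βv hD u y) = u := by
  rw [decD]
  split
  · next h => exact h.choose_spec.2
  · exact (hD u).choose_spec

lemma decD_enc (hD : ∀ u, ∃ d, βv d = u) (hT : 0 < n + s + m) (hRT : k * (n + s + m) ≤ 2 ^ R)
    (d : Fin k × Fin (n + s + m)) :
    decD βv hD (βv d) (encD k (n + s + m) R d) = d := by
  rw [decD]
  have hex : ∃ d', encD k (n + s + m) R d' = encD k (n + s + m) R d ∧ βv d' = βv d :=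
    ⟨d, rfl, rfl⟩
  rw [dif_pos hex]
  have h1 := hex.choose_spec
  exact encD_inj hT hRT h1.1

/-- prefix-L2 to U and to W0, and the color bits of a slot -/
def phi2 (f : (ℕ → Bool) ≃ₜ (ℕ → Bool)) (L L0 L2 : ℕ) (x : Fin L2 → Bool) : Fin L → Bool :=
  phi0 f L L0 (prW L0 L2 x)

def colb (L0 R L2 : ℕ) (x : Fin L2 → Bool) : Fin R → Bool :=
  fun i => if h : L0 + i.val < L2 then x ⟨L0 + i.val, h⟩ else false

/-- glue a W0 word and color bits into a slot -/
def glueW (L0 R L2 : ℕ) (w : Fin L0 → Bool) (y : Fin R → Bool) : Fin L2 → Bool :=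
  fun p => if h : p.val < L0 then w ⟨p.val, h⟩
    else if h2 : p.val - L0 < R then y ⟨p.val - L0, h2⟩ else false

lemma glueW_pr0 (hL2 : L2 = L0 + R) (w : Fin L0 → Bool) (y : Fin R → Bool) :
    prW L0 L2 (glueW L0 R L2 w y) = w := by
  funext i
  have h1 : i.val < L2 := by omega
  simp [prW, glueW, h1, i.isLt]

lemma glueW_col (hL2 : L2 = L0 + R) (w : Fin L0 → Bool) (y : Fin R → Bool) :
    colb L0 R L2 (glueW L0 R L2 w y) = y := by
  funext i
  have h1 : L0 + i.val < L2 := by omega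
  have h2 : ¬ (L0 + i.val < L0) := by omega
  have h3 : L0 + i.val - L0 < R := by omega
  simp only [colb, glueW, dif_pos h1, dif_neg h2, dif_pos h3]
  congr 1
  apply Fin.ext
  simp

lemma glueW_prL (hL2 : L2 = L0 + R) (hLL0 : L ≤ L0) (w : Fin L0 → Bool) (y : Fin R → Bool) :
    prW L L2 (glueW L0 R L2 w y) = prW L L0 w := by
  funext i
  have h0 : i.val < L0 := by omega
  have h1 : i.val < L2 := by omega
  simp [prW, glueW, h0, h1]

lemma glueW_phi (hL2 : L2 = L0 + R) (w : Fin L0 → Bool) (y : Fin R → Bool) :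
    phi2 f L L0 L2 (glueW L0 R L2 w y) = phi0 f L L0 w := by
  rw [phi2, glueW_pr0 hL2]

section Chi

variable (βv : Fin k × Fin (n + s + m) → Fin L → Bool)
variable (hD : ∀ u, ∃ d, βv d = u)
variable (hFB : ∀ x : Fin L2 → Bool, ∃ dd : Fin k × Fin (n + s + m),
  βv dd = prW L L2 x ∧ ∃ d', EDp dd d' ∧ βv d' = phi2 f L L0 L2 x)

open Classical in
/-- the coloring of slots -/
noncomputable def chiD (x : Fin L2 → Bool) : Fin k × Fin (n + s + m) :=
  let dt := decD βv hD (prW L L2 x) (colb L0 R L2 x)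
  if h : ∃ d', EDp dt d' ∧ βv d' = phi2 f L L0 L2 x then dt else (hFB x).choose

lemma chiD_beta (x : Fin L2 → Bool) :
    βv (chiD (R := R) f βv hD hFB x) = prW L L2 x := by
  rw [chiD]
  split
  · exact decD_beta βv hD _ _
  · exact (hFB x).choose_spec.1

lemma chiD_valid (x : Fin L2 → Bool) :
    ∃ d', EDp (chiD (R := R) f βv hD hFB x) d' ∧ βv d' = phi2 f L L0 L2 x := by
  rw [chiD]
  split
  · next h => exact h
  · exact (hFB x).choose_spec.2

lemma chiD_hit (hT : 0 < n + s + m) (hRT : k * (n + s + m) ≤ 2 ^ R)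
    (d : Fin k × Fin (n + s + m)) (x : Fin L2 → Bool)
    (h1 : prW L L2 x = βv d) (h2 : colb L0 R L2 x = encD k (n + s + m) R d)
    (h3 : ∃ d', EDp d d' ∧ βv d' = phi2 f L L0 L2 x) :
    chiD (R := R) f βv hD hFB x = d := by
  have hdt : decD βv hD (prW L L2 x) (colb L0 R L2 x) = d := by
    rw [h1, h2]
    exact decD_enc βv hD hT hRT d
  rw [chiD]
  split
  · next _h => exact hdt
  · next h =>
    rw [← hdt] at h3
    exact absurd h3 h

/-- piece-nonemptiness: every color is attained by some slot -/
lemma chiD_surj (hL2 : L2 = L0 + R) (hLL0 : L ≤ L0)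
    (hT : 0 < n + s + m) (hRT : k * (n + s + m) ≤ 2 ^ R)
    (hhom : ∀ d d', EDp (n := n) (s := s) (m := m) (k := k) d d' →
      FedgeR f L L0 (βv d) (βv d'))
    (hout : ∀ d, ∃ d', EDp (n := n) (s := s) (m := m) (k := k) d d')
    (d : Fin k × Fin (n + s + m)) :
    ∃ x, chiD (R := R) f βv hD hFB x = d := by
  obtain ⟨d', hdd'⟩ := hout d
  obtain ⟨w, hw1, hw2⟩ := hhom d d' hdd'
  refine ⟨glueW L0 R L2 w (encD k (n + s + m) R d), chiD_hit f βv hD hFB hT hRT d _ ?_ ?_ ?_⟩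
  · rw [glueW_prL hL2 hLL0, hw1]
  · rw [glueW_col hL2]
  · rw [glueW_phi f hL2, hw2]
    exact ⟨d', hdd', rfl⟩

/-- edge-realization slots -/
lemma chiD_edge_slot (hL2 : L2 = L0 + R) (hLL0 : L ≤ L0)
    (hT : 0 < n + s + m) (hRT : k * (n + s + m) ≤ 2 ^ R)
    (hhom : ∀ d d', EDp (n := n) (s := s) (m := m) (k := k) d d' →
      FedgeR f L L0 (βv d) (βv d'))
    (d d' : Fin k × Fin (n + s + m)) (hdd' : EDp (n := n) (s := s) (m := m) (k := k) d d') :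
    ∃ x, chiD (R := R) f βv hD hFB x = d ∧ phi2 f L L0 L2 x = βv d' := by
  obtain ⟨w, hw1, hw2⟩ := hhom d d' hdd'
  have hphi : phi2 f L L0 L2 (glueW L0 R L2 w (encD k (n + s + m) R d)) = βv d' := by
    rw [glueW_phi f hL2, hw2]
  refine ⟨glueW L0 R L2 w (encD k (n + s + m) R d),
    chiD_hit f βv hD hFB hT hRT d _ ?_ ?_ ?_, hphi⟩
  · rw [glueW_prL hL2 hLL0, hw1]
  · rw [glueW_col hL2]
  · rw [hphi]
    exact ⟨d', hdd', rfl⟩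

end Chi

section Ts

/-- atoms: words of length L2 + L2; first and second halves -/
def frontW (L2 : ℕ) (v : Fin (L2 + L2) → Bool) : Fin L2 → Bool :=
  fun i => v ⟨i.val, by omega⟩

def tailW (L2 : ℕ) (v : Fin (L2 + L2) → Bool) : Fin L2 → Bool :=
  fun i => v ⟨L2 + i.val, by omega⟩

def glue2 (L2 : ℕ) (x xh : Fin L2 → Bool) : Fin (L2 + L2) → Bool :=
  fun p => if h : p.val < L2 then x ⟨p.val, h⟩ else xh ⟨p.val - L2, by omega⟩

lemma frontW_glue2 (x xh : Fin L2 → Bool) : frontW L2 (glue2 L2 x xh) = x := by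
  funext i
  simp [frontW, glue2, i.isLt]

lemma tailW_glue2 (x xh : Fin L2 → Bool) : tailW L2 (glue2 L2 x xh) = xh := by
  funext i
  have h : ¬ (L2 + i.val < L2) := by omega
  simp only [tailW, glue2, dif_neg h]
  congr 1
  apply Fin.ext
  simp

variable (βv : Fin k × Fin (n + s + m) → Fin L → Bool)
variable (hD : ∀ u, ∃ d, βv d = u)
variable (hFB : ∀ x : Fin L2 → Bool, ∃ dd : Fin k × Fin (n + s + m),
  βv dd = prW L L2 x ∧ ∃ d', EDp dd d' ∧ βv d' = phi2 f L L0 L2 x)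
variable (hEXD : ∀ x : Fin L2 → Bool, ∃ x0 : Fin L2 → Bool,
  EDp (chiD (R := R) f βv hD hFB x) (chiD (R := R) f βv hD hFB x0) ∧
    βv (chiD (R := R) f βv hD hFB x0) = phi2 f L L0 L2 x)

open Classical in
/-- the target-slot map on atoms -/
noncomputable def tsD (v : Fin (L2 + L2) → Bool) : Fin L2 → Bool :=
  let x := frontW L2 v
  let xh := tailW L2 v
  if EDp (chiD (R := R) f βv hD hFB x) (chiD (R := R) f βv hD hFB xh) ∧
      βv (chiD (R := R) f βv hD hFB xh) = phi2 f L L0 L2 x then xh else (hEXD x).choose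

lemma tsD_edge (v : Fin (L2 + L2) → Bool) :
    EDp (chiD (R := R) f βv hD hFB (frontW L2 v)) (chiD (R := R) f βv hD hFB (tsD f βv hD hFB hEXD v)) ∧
      βv (chiD (R := R) f βv hD hFB (tsD f βv hD hFB hEXD v)) = phi2 f L L0 L2 (frontW L2 v) := by
  rw [tsD]
  split
  · next h => exact h
  · exact (hEXD _).choose_spec

lemma tsD_surj (hn : 0 < n) (hs : 0 < s) (hm : 0 < m)
    (hL2 : L2 = L0 + R) (hLL0 : L ≤ L0)
    (hT : 0 < n + s + m) (hRT : k * (n + s + m) ≤ 2 ^ R)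
    (hhom : ∀ d d', EDp (n := n) (s := s) (m := m) (k := k) d d' →
      FedgeR f L L0 (βv d) (βv d')) :
    Function.Surjective (tsD f βv hD hFB hEXD) := by
  intro xh
  obtain ⟨d, hd⟩ := EDp_in (k := k) hn hs hm (chiD (R := R) f βv hD hFB xh)
  obtain ⟨x, hx1, hx2⟩ := chiD_edge_slot f βv hD hFB hL2 hLL0 hT hRT hhom d
    (chiD (R := R) f βv hD hFB xh) hd
  have hcond : EDp (chiD (R := R) f βv hD hFB x) (chiD (R := R) f βv hD hFB xh) ∧
      βv (chiD (R := R) f βv hD hFB xh) = phi2 f L L0 L2 x := ⟨by rw [hx1]; exact hd, by rw [hx2]⟩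
  refine ⟨glue2 L2 x xh, ?_⟩
  rw [tsD]
  split
  · next _h => exact tailW_glue2 x xh
  · next h =>
    rw [frontW_glue2, tailW_glue2] at h
    exact absurd hcond h

lemma tsD_realize (hL2 : L2 = L0 + R) (hLL0 : L ≤ L0)
    (hT : 0 < n + s + m) (hRT : k * (n + s + m) ≤ 2 ^ R)
    (hhom : ∀ d d', EDp (n := n) (s := s) (m := m) (k := k) d d' →
      FedgeR f L L0 (βv d) (βv d'))
    (hout : ∀ d, ∃ d', EDp (n := n) (s := s) (m := m) (k := k) d d')
    (d d' : Fin k × Fin (n + s + m)) (hdd' : EDp (n := n) (s := s) (m := m) (k := k) d d') :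
    ∃ v, chiD (R := R) f βv hD hFB (frontW L2 v) = d ∧
      chiD (R := R) f βv hD hFB (tsD f βv hD hFB hEXD v) = d' := by
  obtain ⟨x, hx1, hx2⟩ := chiD_edge_slot f βv hD hFB hL2 hLL0 hT hRT hhom d d' hdd'
  obtain ⟨xh, hxh⟩ := chiD_surj f βv hD hFB hL2 hLL0 hT hRT hhom hout d'
  refine ⟨glue2 L2 x xh, ?_, ?_⟩
  · rw [frontW_glue2, hx1]
  · have hcond : EDp (chiD (R := R) f βv hD hFB x) (chiD (R := R) f βv hD hFB xh) ∧
        βv (chiD (R := R) f βv hD hFB xh) = phi2 f L L0 L2 x :=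
      ⟨by rw [hx1, hxh]; exact hdd', by rw [hxh, hx2]⟩
    have hts : tsD f βv hD hFB hEXD (glue2 L2 x xh) = xh := by
      rw [tsD]
      split
      · next _h => exact tailW_glue2 x xh
      · next h =>
        rw [frontW_glue2, tailW_glue2] at h
        exact absurd hcond h
    rw [hts, hxh]

end Ts
end WithBeta
end Coloring
theorem approx_by_dumbbell_homeo (f : (ℕ → Bool) ≃ₜ (ℕ → Bool)) (ε : ℝ) (hε : 0 < ε) :
    ∃ K N S M : ℕ, 0 < K ∧ 0 < N ∧ 0 < S ∧ 0 < M ∧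
      ∀ k n s m : ℕ, ∀ _hk : K ≤ k, ∀ _hs : S ≤ s,
        ∀ hn : 0 < n, ∀ _hN : N ∣ n, ∀ hm : 0 < m, ∀ _hM : M ∣ m,
        ∃ (g : (ℕ → Bool) ≃ₜ (ℕ → Bool)) (P : Finset (Set (ℕ → Bool))),
          IsPartition P ∧ mesh (↑P : Set (Set (ℕ → Bool))) < ε ∧
          (∀ σ, cantorDist (f σ) (g σ) < ε) ∧
          ∃ e : {a // a ∈ P} ≃ Fin k × Fin (n + s + m),
            ∀ a b : {a // a ∈ P}, gammaEdge (⇑g) a.val b.val ↔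
              ((e a).1 = (e b).1 ∧ dumbbellEdge n s m (e a).2 (e b).2) := by
  classical
  set L := max 1 (⌈1/ε⌉₊) with hLdef
  obtain ⟨L0', hL0'⟩ := exists_unif f f.continuous L
  set L0 := max L L0' with hL0def
  have hLL0 : L ≤ L0 := le_max_left _ _
  have hU : ∀ σ τ, resN L0 σ = resN L0 τ → resN L (f σ) = resN L (f τ) := by
    intro σ τ h
    apply hL0'
    rw [resN_eq_iff] at h ⊢
    intro i hi
    exact h i (lt_of_lt_of_le hi (le_max_right _ _))
  set Q := 2 ^ L with hQdef
  have hQpos : 0 < Q := Nat.two_pow_pos L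
  refine ⟨2 ^ L0, Nat.factorial Q, 2 * Q + 2, Nat.factorial Q,
    Nat.two_pow_pos L0, Nat.factorial_pos Q, by omega, Nat.factorial_pos Q, ?_⟩
  intro k n s m hk hs hn hN hm hM
  have hspos : 0 < s := by omega
  have hT : 0 < n + s + m := by omega
  set R := k * (n + s + m) with hRdef
  have hRT : k * (n + s + m) ≤ 2 ^ R := le_of_lt (Nat.lt_two_pow_self (n := R))
  set L2 := L0 + R with hL2def
  have hL2 : L2 = L0 + R := rfl
  have hLL2 : L ≤ L2 := by omega
  have hL0L2 : L0 ≤ L2 := by omega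
  -- the beta map
  set βv := betaF f L L0 Q k n s m with hbetadef
  have hhom : ∀ d d', EDp (n := n) (s := s) (m := m) (k := k) d d' →
      FedgeR f L L0 (βv d) (βv d') := fun d d' hdd' =>
    betaF_hom hU hLL0 hQdef hn hm hN hM hs d d' hdd'.1 hdd'.2
  have hD : ∀ u, ∃ d, βv d = u := fun u =>
    betaF_surj (f := f) hk hQpos hn hs hm hLL0 u
  have hFB : ∀ x : Fin L2 → Bool, ∃ dd : Fin k × Fin (n + s + m),
      βv dd = prW L L2 x ∧ ∃ d', EDp dd d' ∧ βv d' = phi2 f L L0 L2 x := by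
    intro x
    obtain ⟨d, d', hsame, hedge, hd, hd'⟩ :=
      betaF_cover (f := f) (L := L) hk hQpos hn hs hm (prW L0 L2 x)
    refine ⟨d, ?_, d', ⟨hsame, hedge⟩, ?_⟩
    · rw [hbetadef, hd, prW_prW hLL0 hL0L2]
    · rw [hbetadef, hd']
      rfl
  have hout : ∀ d, ∃ d', EDp (n := n) (s := s) (m := m) (k := k) d d' :=
    EDp_out hn hspos hm
  have hEXD : ∀ x : Fin L2 → Bool, ∃ x0 : Fin L2 → Bool,
      EDp (chiD (R := R) f βv hD hFB x) (chiD (R := R) f βv hD hFB x0) ∧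
        βv (chiD (R := R) f βv hD hFB x0) = phi2 f L L0 L2 x := by
    intro x
    obtain ⟨d', hd'1, hd'2⟩ := chiD_valid f βv hD hFB x
    obtain ⟨x0, hx0⟩ := chiD_surj f βv hD hFB hL2 hLL0 hT hRT hhom hout d'
    exact ⟨x0, by rw [hx0]; exact hd'1, by rw [hx0]; exact hd'2⟩
  set tsf := tsD f βv hD hFB hEXD with htsfdef
  have htsurj : Function.Surjective tsf :=
    tsD_surj f βv hD hFB hEXD hn hspos hm hL2 hLL0 hT hRT hhom
  set g := ghomeo tsf htsurj with hgdef
  have hgres : ∀ σ, resN L2 (g σ) = tsf (resN (L2 + L2) σ) := ghomeo_res tsf htsurj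
  -- the pieces
  set piece : (Fin k × Fin (n + s + m)) → Set (ℕ → Bool) :=
    fun d => {σ | chiD (R := R) f βv hD hFB (resN L2 σ) = d} with hpiecedef
  have hclo : ∀ d, IsClopen (piece d) := fun d => by
    apply clopen_of_det (fun σ => chiD (R := R) f βv hD hFB (resN L2 σ)) L2
    intro σ τ h
    rw [h]
  have hne : ∀ d, (piece d).Nonempty := by
    intro d
    obtain ⟨x, hx⟩ := chiD_surj f βv hD hFB hL2 hLL0 hT hRT hhom hout d
    refine ⟨extN x, ?_⟩
    show chiD (R := R) f βv hD hFB (resN L2 (extN x)) = d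
    rw [resN_extN]
    exact hx
  have hinj : Function.Injective piece := by
    intro d d' h
    obtain ⟨σ, hσ⟩ := hne d
    have hσ' : σ ∈ piece d' := h ▸ hσ
    have h1 : chiD (R := R) f βv hD hFB (resN L2 σ) = d := hσ
    have h2 : chiD (R := R) f βv hD hFB (resN L2 σ) = d' := hσ'
    rw [← h1, h2]
  set P := Finset.image piece Finset.univ with hPdef
  -- beta value on pieces
  have hresL : ∀ d, ∀ σ ∈ piece d, resN L σ = βv d := by
    intro d σ hσ
    have h1 : chiD (R := R) f βv hD hFB (resN L2 σ) = d := hσ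
    rw [← prW_resN hLL2 σ, ← chiD_beta f βv hD hFB (resN L2 σ), h1]
  -- front of an atom
  have hfront : ∀ σ : ℕ → Bool, frontW L2 (resN (L2 + L2) σ) = resN L2 σ := by
    intro σ
    funext i
    rfl
  -- edge characterization
  have hedgechar : ∀ d d', gammaEdge (⇑g) (piece d) (piece d') ↔
      EDp (n := n) (s := s) (m := m) (k := k) d d' := by
    intro d d'
    constructor
    · rintro ⟨τ, ⟨σ, hσ, rfl⟩, hτ⟩
      have h1 : chiD (R := R) f βv hD hFB (resN L2 σ) = d := hσ
      have h2 : chiD (R := R) f βv hD hFB (resN L2 (g σ)) = d' := hτ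
      rw [hgres σ] at h2
      have hts := (tsD_edge f βv hD hFB hEXD (resN (L2 + L2) σ)).1
      rw [hfront σ, h1] at hts
      rw [htsfdef] at h2
      rw [h2] at hts
      exact hts
    · intro hdd'
      obtain ⟨v, hv1, hv2⟩ :=
        tsD_realize f βv hD hFB hEXD hL2 hLL0 hT hRT hhom hout d d' hdd'
      refine ⟨g (extN v), ⟨extN v, ?_, rfl⟩, ?_⟩
      · show chiD (R := R) f βv hD hFB (resN L2 (extN v)) = d
        have : resN L2 (extN v) = frontW L2 v := by
          funext i
          have h1 : i.val < L2 + L2 := by omega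
          simp [resN, extN, frontW, h1]
        rw [this, hv1]
      · show chiD (R := R) f βv hD hFB (resN L2 (g (extN v))) = d'
        rw [hgres, resN_extN, htsfdef, hv2]
  -- the equiv
  have hmemP : ∀ d, piece d ∈ P := fun d =>
    Finset.mem_image_of_mem piece (Finset.mem_univ d)
  have hbij : Function.Bijective
      (fun d : Fin k × Fin (n + s + m) => (⟨piece d, hmemP d⟩ : {a // a ∈ P})) := by
    constructor
    · intro d d' h
      exact hinj (congrArg Subtype.val h)
    · rintro ⟨a, ha⟩
      obtain ⟨d, _, hd⟩ := Finset.mem_image.1 ha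
      exact ⟨d, Subtype.ext hd⟩
  set e0 := Equiv.ofBijective _ hbij with he0def
  refine ⟨g, P, ?_, ?_, ?_, e0.symm, ?_⟩
  · -- IsPartition
    refine ⟨?_, ?_, ?_⟩
    · intro a ha
      obtain ⟨d, _, hd⟩ := Finset.mem_image.1 ha
      exact hd ▸ ⟨hclo d, hne d⟩
    · intro a ha b hb hab
      obtain ⟨d, _, hd⟩ := Finset.mem_image.1 ha
      obtain ⟨d', _, hd'⟩ := Finset.mem_image.1 hb
      rw [← hd, ← hd']
      rw [Set.disjoint_left]
      intro σ hσ hσ'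
      have h1 : chiD (R := R) f βv hD hFB (resN L2 σ) = d := hσ
      have h2 : chiD (R := R) f βv hD hFB (resN L2 σ) = d' := hσ'
      exact hab (by rw [← hd, ← hd', ← h1, h2])
    · ext σ
      simp only [Set.mem_sUnion, Set.mem_univ, iff_true]
      exact ⟨piece (chiD (R := R) f βv hD hFB (resN L2 σ)), hmemP _, rfl⟩
  · -- mesh
    have hmesh : mesh (↑P : Set (Set (ℕ → Bool))) ≤ 1 / (L + 1) := by
      apply Real.sSup_le
      · rintro x ⟨a, haP, rfl⟩
        obtain ⟨d, _, hd⟩ := Finset.mem_image.1 haP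
        rw [← hd]
        apply cantorDiam_le
        intro σ hσ τ hτ i hi
        have h1 := hresL d σ hσ
        have h2 := hresL d τ hτ
        have := congrFun (h1.trans h2.symm) ⟨i, hi⟩
        exact this
      · positivity
    calc mesh (↑P : Set (Set (ℕ → Bool))) ≤ 1 / (L + 1) := hmesh
    _ < ε := one_div_succ_lt hε (le_max_right _ _)
  · -- distance
    intro σ
    have hagree : resN L (g σ) = resN L (f σ) := by
      have h1 : resN L (g σ) = prW L L2 (resN L2 (g σ)) := (prW_resN hLL2 _).symm
      rw [h1, hgres σ]
      have hts := (tsD_edge f βv hD hFB hEXD (resN (L2 + L2) σ)).2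
      rw [htsfdef, ← chiD_beta f βv hD hFB (tsD f βv hD hFB hEXD (resN (L2 + L2) σ)), hts,
        hfront σ]
      show phi0 f L L0 (prW L0 L2 (resN L2 σ)) = resN L (f σ)
      rw [prW_resN hL0L2, phi0_res hU]
    have := cantorDist_le L (f σ) (g σ) (by
      rw [← resN_eq_iff]
      exact hagree.symm)
    calc cantorDist (f σ) (g σ) ≤ 1 / (L + 1) := this
    _ < ε := one_div_succ_lt hε (le_max_right _ _)
  · -- the graph
    intro a b
    have ha : a.val = piece (e0.symm a) := by
      conv_lhs => rw [← e0.apply_symm_apply a]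
      rfl
    have hb : b.val = piece (e0.symm b) := by
      conv_lhs => rw [← e0.apply_symm_apply b]
      rfl
    rw [ha, hb]
    exact hedgechar (e0.symm a) (e0.symm b)
end
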